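/- arXiv:2407.21667 — 5 statements merged into one kernel-verified Lean document; each statement's English description precedes it below -/
import Mathlib

section
/- For ε ∈ (0,1), the smooth function u^ε(z₁,z₂) = -2(Re z₂)²/log(|z₁|² + ε) - (|z₁|² + ε)(log(|z₁|² + ε) - 2) on 𝔻_{1-ε} × ℂ satisfies det(∂∂̄ u^ε) = 1 - ε[2(Re z₂)²/((|z₁|² + ε)² log³(|z₁|² + ε)) + 1/((|z₁|² + ε) log(|z₁|² + ε))]. -/
/-- Wirtinger derivative `∂/∂z₁`. -/
noncomputable def wd1 (f : ℂ × ℂ → ℂ) (z : ℂ × ℂ) : ℂ :=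
  (fderiv ℝ f z (1, 0) - Complex.I * fderiv ℝ f z (Complex.I, 0)) / 2

/-- Wirtinger derivative `∂/∂z̄₁`. -/
noncomputable def wd1b (f : ℂ × ℂ → ℂ) (z : ℂ × ℂ) : ℂ :=
  (fderiv ℝ f z (1, 0) + Complex.I * fderiv ℝ f z (Complex.I, 0)) / 2

/-- Wirtinger derivative `∂/∂z₂`. -/
noncomputable def wd2 (f : ℂ × ℂ → ℂ) (z : ℂ × ℂ) : ℂ :=
  (fderiv ℝ f z (0, 1) - Complex.I * fderiv ℝ f z (0, Complex.I)) / 2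

/-- Wirtinger derivative `∂/∂z̄₂`. -/
noncomputable def wd2b (f : ℂ × ℂ → ℂ) (z : ℂ × ℂ) : ℂ :=
  (fderiv ℝ f z (0, 1) + Complex.I * fderiv ℝ f z (0, Complex.I)) / 2

/-- The complex Hessian `(u_{i j̄})` of `f` at `z`. -/
noncomputable def cHess (f : ℂ × ℂ → ℂ) (z : ℂ × ℂ) : Matrix (Fin 2) (Fin 2) ℂ :=
  !![wd1 (wd1b f) z, wd1 (wd2b f) z; wd2 (wd1b f) z, wd2 (wd2b f) z]

/-- `u^ε(z₁,z₂) = -2(Re z₂)²/log(|z₁|²+ε) - (|z₁|²+ε)(log(|z₁|²+ε)-2)` (as a ℂ-valued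
function with real values). -/
noncomputable def uE (ε : ℝ) (z : ℂ × ℂ) : ℂ :=
  ((-2 * (z.2.re) ^ 2 / Real.log ((‖z.1‖) ^ 2 + ε)
    - ((‖z.1‖) ^ 2 + ε) * (Real.log ((‖z.1‖) ^ 2 + ε) - 2) : ℝ) : ℂ)

open Complex ContinuousLinearMap

noncomputable def phi0 (ε : ℝ) (q : ℝ × ℝ) : ℝ :=
  -((q.1 + ε) * (Real.log (q.1 + ε) - 2)) + (-2 / Real.log (q.1 + ε)) * q.2 ^ 2

noncomputable def c1fun (ε : ℝ) (q : ℝ × ℝ) : ℝ :=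
  -(Real.log (q.1 + ε) - 1) + (2 / ((q.1 + ε) * Real.log (q.1 + ε) ^ 2)) * q.2 ^ 2

noncomputable def c2fun (ε : ℝ) (q : ℝ × ℝ) : ℝ :=
  0 + (-2 / Real.log (q.1 + ε)) * q.2

lemma lift (φ : ℝ × ℝ → ℝ) (L : ℝ × ℝ →L[ℝ] ℝ) (z : ℂ × ℂ)
    (h : HasFDerivAt φ L (Complex.normSq z.1, z.2.re)) :
    ∃ D : (ℂ × ℂ) →L[ℝ] ℂ,
      HasFDerivAt (fun w : ℂ × ℂ => ((φ (Complex.normSq w.1, w.2.re) : ℝ) : ℂ)) D z ∧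
      ∀ v : ℂ × ℂ, D v = (((z.1.re * v.1.re + z.1.im * v.1.im) * 2 * L (1, 0)
          + v.2.re * L (0, 1) : ℝ) : ℂ) := by
  have hlin : ∀ a b : ℝ, L (a, b) = a * L (1, 0) + b * L (0, 1) := by
    intro a b
    have hab : ((a, b) : ℝ × ℝ) = a • ((1 : ℝ), (0 : ℝ)) + b • ((0 : ℝ), (1 : ℝ)) := by
      simp [Prod.ext_iff]
    rw [hab, map_add, map_smul, map_smul, smul_eq_mul, smul_eq_mul]
  have hre : HasFDerivAt (fun w : ℂ × ℂ => w.1.re)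
      (Complex.reCLM.comp (fst ℝ ℂ ℂ)) z := (Complex.reCLM.comp (fst ℝ ℂ ℂ)).hasFDerivAt
  have him : HasFDerivAt (fun w : ℂ × ℂ => w.1.im)
      (Complex.imCLM.comp (fst ℝ ℂ ℂ)) z := (Complex.imCLM.comp (fst ℝ ℂ ℂ)).hasFDerivAt
  have hre2 : HasFDerivAt (fun w : ℂ × ℂ => w.2.re)
      (Complex.reCLM.comp (snd ℝ ℂ ℂ)) z := (Complex.reCLM.comp (snd ℝ ℂ ℂ)).hasFDerivAt
  have h1 := (hre.mul hre).add (him.mul him)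
  have hn : HasFDerivAt (fun w : ℂ × ℂ => Complex.normSq w.1)
      ((z.1.re • (Complex.reCLM.comp (fst ℝ ℂ ℂ)) + z.1.re • (Complex.reCLM.comp (fst ℝ ℂ ℂ))) +
       (z.1.im • (Complex.imCLM.comp (fst ℝ ℂ ℂ)) + z.1.im • (Complex.imCLM.comp (fst ℝ ℂ ℂ)))) z := by
    simpa only [Complex.normSq_apply, Pi.mul_def, Pi.add_def] using h1
  have hm := hn.prodMk hre2
  have hφ := h.comp z hm
  have hF := Complex.ofRealCLM.hasFDerivAt.comp z hφ
  refine ⟨_, hF, fun v => ?_⟩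
  simp only [coe_comp', Function.comp_apply, prod_apply, add_apply, coe_smul', Pi.smul_apply,
    coe_fst', coe_snd', Complex.ofRealCLM_apply, Complex.reCLM_apply, Complex.imCLM_apply, smul_eq_mul]
  rw [hlin]
  push_cast
  ring

lemma comb (f g h : ℝ → ℝ) (f' g' h' : ℝ) (p : ℝ × ℝ)
    (hf : HasDerivAt f f' p.1) (hg : HasDerivAt g g' p.1) (hh : HasDerivAt h h' p.2) :
    ∃ D : ℝ × ℝ →L[ℝ] ℝ, HasFDerivAt (fun q : ℝ × ℝ => f q.1 + g q.1 * h q.2) D p ∧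
      D (1, 0) = f' + g' * h p.2 ∧ D (0, 1) = g p.1 * h' := by
  have h1 : HasFDerivAt (fun q : ℝ × ℝ => f q.1) (f' • fst ℝ ℝ ℝ) p :=
    hf.comp_hasFDerivAt p hasFDerivAt_fst
  have h2 : HasFDerivAt (fun q : ℝ × ℝ => g q.1) (g' • fst ℝ ℝ ℝ) p :=
    hg.comp_hasFDerivAt p hasFDerivAt_fst
  have h3 : HasFDerivAt (fun q : ℝ × ℝ => h q.2) (h' • snd ℝ ℝ ℝ) p :=
    hh.comp_hasFDerivAt p hasFDerivAt_snd
  refine ⟨_, h1.add (h2.mul h3), ?_, ?_⟩ <;>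
    simp [add_apply, coe_smul', Pi.smul_apply, coe_fst', coe_snd', smul_eq_mul] <;> ring

lemma hd_log (ε r : ℝ) (ht : r + ε ≠ 0) :
    HasDerivAt (fun s : ℝ => Real.log (s + ε)) ((r + ε)⁻¹) r := by
  have h1 : HasDerivAt (fun s : ℝ => s + ε) 1 r := (hasDerivAt_id r).add_const ε
  have := (Real.hasDerivAt_log ht).comp r h1
  simpa [Function.comp_def] using this

lemma hd_f0 (ε r : ℝ) (ht : 0 < r + ε) :
    HasDerivAt (fun s : ℝ => -((s + ε) * (Real.log (s + ε) - 2)))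
      (-(Real.log (r + ε) - 1)) r := by
  have h1 : HasDerivAt (fun s : ℝ => s + ε) 1 r := (hasDerivAt_id r).add_const ε
  have h2 := (hd_log ε r ht.ne').sub_const 2
  have h3 := (h1.mul h2).neg
  refine h3.congr_deriv ?_
  field_simp
  ring

lemma hd_g0 (ε r : ℝ) (ht : 0 < r + ε) (hL : Real.log (r + ε) ≠ 0) :
    HasDerivAt (fun s : ℝ => -2 / Real.log (s + ε))
      (2 / ((r + ε) * Real.log (r + ε) ^ 2)) r := by
  have h3 := (hasDerivAt_const r (-2 : ℝ)).div (hd_log ε r ht.ne') hL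
  refine h3.congr_deriv ?_
  field_simp
  ring

lemma hd_f1 (ε r : ℝ) (ht : 0 < r + ε) :
    HasDerivAt (fun s : ℝ => -(Real.log (s + ε) - 1)) (-(1 / (r + ε))) r := by
  have := ((hd_log ε r ht.ne').sub_const 1).neg
  simpa [one_div, Pi.neg_def] using this

lemma hd_g1 (ε r : ℝ) (ht : 0 < r + ε) (hL : Real.log (r + ε) ≠ 0) :
    HasDerivAt (fun s : ℝ => 2 / ((s + ε) * Real.log (s + ε) ^ 2))
      (-2 * (Real.log (r + ε) + 2) / ((r + ε) ^ 2 * Real.log (r + ε) ^ 3)) r := by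
  have h1 : HasDerivAt (fun s : ℝ => s + ε) 1 r := (hasDerivAt_id r).add_const ε
  have h2 := hd_log ε r ht.ne'
  have h3 := h1.mul (h2.pow 2)
  have h4 := (hasDerivAt_const r (2 : ℝ)).div h3 (mul_ne_zero ht.ne' (pow_ne_zero 2 hL))
  refine h4.congr_deriv ?_
  simp only [Pi.mul_apply, Pi.pow_apply]
  field_simp
  ring

lemma wd_eval (φ : ℝ × ℝ → ℝ) (L : ℝ × ℝ →L[ℝ] ℝ) (z : ℂ × ℂ)
    (h : HasFDerivAt φ L (Complex.normSq z.1, z.2.re)) :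
    wd1b (fun w : ℂ × ℂ => ((φ (Complex.normSq w.1, w.2.re) : ℝ) : ℂ)) z
        = (L (1, 0) : ℂ) * z.1 ∧
    wd2b (fun w : ℂ × ℂ => ((φ (Complex.normSq w.1, w.2.re) : ℝ) : ℂ)) z
        = (L (0, 1) : ℂ) / 2 ∧
    wd1 (fun w : ℂ × ℂ => ((φ (Complex.normSq w.1, w.2.re) : ℝ) : ℂ)) z
        = (L (1, 0) : ℂ) * (starRingEnd ℂ) z.1 ∧
    wd2 (fun w : ℂ × ℂ => ((φ (Complex.normSq w.1, w.2.re) : ℝ) : ℂ)) z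
        = (L (0, 1) : ℂ) / 2 ∧
    wd1 (fun w : ℂ × ℂ => w.1 * ((φ (Complex.normSq w.1, w.2.re) : ℝ) : ℂ)) z
        = z.1 * (starRingEnd ℂ) z.1 * (L (1, 0) : ℂ)
          + ((φ (Complex.normSq z.1, z.2.re) : ℝ) : ℂ) ∧
    wd2 (fun w : ℂ × ℂ => w.1 * ((φ (Complex.normSq w.1, w.2.re) : ℝ) : ℂ)) z
        = z.1 * (L (0, 1) : ℂ) / 2 := by
  obtain ⟨D, hD, hv⟩ := lift φ L z h
  have hG : HasFDerivAt (fun w : ℂ × ℂ => w.1 * ((φ (Complex.normSq w.1, w.2.re) : ℝ) : ℂ))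
      (z.1 • D + ((φ (Complex.normSq z.1, z.2.re) : ℝ) : ℂ) • fst ℝ ℂ ℂ) z :=
    hasFDerivAt_fst.mul hD
  have hconj : (starRingEnd ℂ) z.1 = (z.1.re : ℂ) - (z.1.im : ℂ) * Complex.I := by
    simp [Complex.ext_iff]
  have hz1 : z.1 = (z.1.re : ℂ) + (z.1.im : ℂ) * Complex.I := (Complex.re_add_im z.1).symm
  refine ⟨?_, ?_, ?_, ?_, ?_, ?_⟩
  · simp only [wd1b, hD.fderiv, hv, Complex.one_re, Complex.one_im, Complex.I_re,
      Complex.I_im, Complex.zero_re, Complex.zero_im]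
    push_cast
    linear_combination (-(L (1, 0) : ℂ)) * hz1
  · simp only [wd2b, hD.fderiv, hv, Complex.one_re, Complex.one_im, Complex.I_re,
      Complex.I_im, Complex.zero_re, Complex.zero_im]
    push_cast; ring
  · simp only [wd1, hD.fderiv, hv, Complex.one_re, Complex.one_im, Complex.I_re,
      Complex.I_im, Complex.zero_re, Complex.zero_im]
    push_cast
    linear_combination (-(L (1, 0) : ℂ)) * hconj
  · simp only [wd2, hD.fderiv, hv, Complex.one_re, Complex.one_im, Complex.I_re,
      Complex.I_im, Complex.zero_re, Complex.zero_im]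
    push_cast; ring
  · simp only [wd1, hG.fderiv, add_apply, coe_smul', Pi.smul_apply, coe_fst',
      smul_eq_mul, hv, Complex.one_re, Complex.one_im, Complex.I_re,
      Complex.I_im, Complex.zero_re, Complex.zero_im]
    push_cast
    linear_combination (-(z.1 * (L (1, 0) : ℂ))) * hconj
      + (-((φ (Complex.normSq z.1, z.2.re) : ℝ) : ℂ) / 2) * Complex.I_sq
  · simp only [wd2, hG.fderiv, add_apply, coe_smul', Pi.smul_apply, coe_fst',
      smul_eq_mul, hv, Complex.one_re, Complex.one_im, Complex.I_re,
      Complex.I_im, Complex.zero_re, Complex.zero_im]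
    push_cast; ring

lemma wd_uE (ε : ℝ) (hε0 : 0 < ε) (w : ℂ × ℂ) (hw : Complex.normSq w.1 + ε < 1) :
    wd1b (uE ε) w = w.1 * ((c1fun ε (Complex.normSq w.1, w.2.re) : ℝ) : ℂ) ∧
    wd2b (uE ε) w = ((c2fun ε (Complex.normSq w.1, w.2.re) : ℝ) : ℂ) := by
  have ht0 : 0 < Complex.normSq w.1 + ε := by
    have := Complex.normSq_nonneg w.1; linarith
  have hLne : Real.log (Complex.normSq w.1 + ε) ≠ 0 := (Real.log_neg ht0 hw).ne
  obtain ⟨D, hD, h10, h01⟩ := comb _ _ _ _ _ _ (Complex.normSq w.1, w.2.re)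
      (hd_f0 ε _ ht0) (hd_g0 ε _ ht0 hLne) (hasDerivAt_pow 2 w.2.re)
  have hD' : HasFDerivAt (phi0 ε) D (Complex.normSq w.1, w.2.re) := hD
  have heq := wd_eval (phi0 ε) D w hD'
  have huE : uE ε = fun v : ℂ × ℂ => ((phi0 ε (Complex.normSq v.1, v.2.re) : ℝ) : ℂ) := by
    funext v
    simp only [uE, phi0, Complex.sq_norm, Complex.ofReal_inj]
    ring
  constructor
  · rw [huE, heq.1, h10]
    simp only [c1fun]
    push_cast
    ring
  · rw [huE, heq.2.1, h01]
    simp only [c2fun]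
    push_cast
    ring

/-- `det(∂∂̄ u^ε) = 1 - ε[2(Re z₂)²/((|z₁|²+ε)² log³(|z₁|²+ε)) + 1/((|z₁|²+ε) log(|z₁|²+ε))]`
on `𝔻_{1-ε} × ℂ`. -/
theorem det_cHess_uE (ε : ℝ) (hε : ε ∈ Set.Ioo (0 : ℝ) 1) (z : ℂ × ℂ)
    (hz : ‖z.1‖ < 1 - ε) :
    (cHess (uE ε) z).det =
      ((1 - ε * (2 * (z.2.re) ^ 2 /
          (((‖z.1‖) ^ 2 + ε) ^ 2 * (Real.log ((‖z.1‖) ^ 2 + ε)) ^ 3)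
        + 1 / (((‖z.1‖) ^ 2 + ε) * Real.log ((‖z.1‖) ^ 2 + ε))) : ℝ) : ℂ) := by
  obtain ⟨hε0, hε1⟩ := hε
  have hzU : Complex.normSq z.1 + ε < 1 := by
    have h2 : ‖z.1‖ ^ 2 < (1 - ε) ^ 2 := by nlinarith [norm_nonneg z.1]
    rw [Complex.sq_norm] at h2
    nlinarith
  have ht0 : 0 < Complex.normSq z.1 + ε := by
    have := Complex.normSq_nonneg z.1; linarith
  have hLne : Real.log (Complex.normSq z.1 + ε) ≠ 0 := (Real.log_neg ht0 hzU).ne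
  have hopen : IsOpen {w : ℂ × ℂ | Complex.normSq w.1 + ε < 1} :=
    isOpen_lt ((Complex.continuous_normSq.comp continuous_fst).add continuous_const)
      continuous_const
  have hmem : {w : ℂ × ℂ | Complex.normSq w.1 + ε < 1} ∈ nhds z := hopen.mem_nhds hzU
  have e1 : wd1b (uE ε) =ᶠ[nhds z]
      fun w : ℂ × ℂ => w.1 * ((c1fun ε (Complex.normSq w.1, w.2.re) : ℝ) : ℂ) :=
    Filter.eventuallyEq_of_mem hmem fun w hw => (wd_uE ε hε0 w hw).1
  have e2 : wd2b (uE ε) =ᶠ[nhds z]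
      fun w : ℂ × ℂ => ((c2fun ε (Complex.normSq w.1, w.2.re) : ℝ) : ℂ) :=
    Filter.eventuallyEq_of_mem hmem fun w hw => (wd_uE ε hε0 w hw).2
  obtain ⟨D1, hD1, h110, h101⟩ := comb _ _ _ _ _ _ (Complex.normSq z.1, z.2.re)
      (hd_f1 ε _ ht0) (hd_g1 ε _ ht0 hLne) (hasDerivAt_pow 2 z.2.re)
  obtain ⟨D2, hD2, h210, h201⟩ := comb _ _ _ _ _ _ (Complex.normSq z.1, z.2.re)
      (hasDerivAt_const (Complex.normSq z.1) (0 : ℝ)) (hd_g0 ε _ ht0 hLne)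
      (hasDerivAt_id z.2.re)
  have hD1' : HasFDerivAt (c1fun ε) D1 (Complex.normSq z.1, z.2.re) := hD1
  have hD2' : HasFDerivAt (c2fun ε) D2 (Complex.normSq z.1, z.2.re) := hD2
  have w1 := wd_eval (c1fun ε) D1 z hD1'
  have w2 := wd_eval (c2fun ε) D2 z hD2'
  have A11 : wd1 (wd1b (uE ε)) z
      = z.1 * (starRingEnd ℂ) z.1 * (D1 (1, 0) : ℂ)
        + ((c1fun ε (Complex.normSq z.1, z.2.re) : ℝ) : ℂ) := by
    simp only [wd1, e1.fderiv_eq]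
    exact w1.2.2.2.2.1
  have A21 : wd2 (wd1b (uE ε)) z = z.1 * (D1 (0, 1) : ℂ) / 2 := by
    simp only [wd2, e1.fderiv_eq]
    exact w1.2.2.2.2.2
  have A12 : wd1 (wd2b (uE ε)) z = (D2 (1, 0) : ℂ) * (starRingEnd ℂ) z.1 := by
    simp only [wd1, e2.fderiv_eq]
    exact w2.2.2.1
  have A22 : wd2 (wd2b (uE ε)) z = (D2 (0, 1) : ℂ) / 2 := by
    simp only [wd2, e2.fderiv_eq]
    exact w2.2.2.2.1
  simp only [cHess, Matrix.det_fin_two_of, A11, A12, A21, A22, Complex.sq_norm]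
  rw [show ((D2 (1, 0) : ℂ) * (starRingEnd ℂ) z.1) * (z.1 * (D1 (0, 1) : ℂ) / 2)
      = (D2 (1, 0) : ℂ) * (D1 (0, 1) : ℂ) / 2 * (z.1 * (starRingEnd ℂ) z.1) from by ring,
    Complex.mul_conj, h110, h101, h210, h201]
  norm_cast
  simp only [c1fun, c2fun, id, Int.cast_negSucc, Nat.cast_one, show (2:ℕ) - 1 = 1 from rfl, pow_one]
  field_simp
  ring
end

section
/- There is no C² function φ defined on a neighborhood of a point p₀ = (0, z₂⁰) ∈ ℂ² such that φ(0,z₂⁰) = 0 and φ(z₁,z₂) ≥ -(Re z₂)²/log|z₁| + 2|z₁|²(1 - log|z₁|) for all (z₁,z₂) in that neighborhood with z₁ ≠ 0. In particular, setting z₂ = z₂⁰, no C² function of z₁ near 0 can satisfy ψ(z₁) ≥ ψ(0) + 2|z₁|²(1 - log|z₁|). -/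
set_option maxHeartbeats 1000000

/-- Auxiliary: second-order Taylor bound kills `2|z|²(1 - log|z|)` lower bounds. -/
theorem aux_no_psi (ψ : ℂ → ℝ) (N : Set ℂ) (hN : N ∈ nhds (0 : ℂ))
    (hψ : ContDiffOn ℝ 2 ψ N) :
    ¬ ∀ z ∈ N, z ≠ 0 →
      ψ 0 + 2 * (‖z‖) ^ 2 * (1 - Real.log (‖z‖)) ≤ ψ z := by
  intro h
  obtain ⟨ε, hε, hball⟩ := Metric.nhds_basis_closedBall.mem_iff.mp hN
  set B := Metric.ball (0 : ℂ) ε with hB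
  have hBopen : IsOpen B := Metric.isOpen_ball
  have hψB : ContDiffOn ℝ 2 ψ B :=
    hψ.mono (Metric.ball_subset_closedBall.trans hball)
  have h2 : ContDiffOn ℝ (1 + 1) ψ B := by norm_num; exact hψB
  obtain ⟨hdiff, -, hfd1⟩ := (contDiffOn_succ_iff_fderiv_of_isOpen hBopen).mp h2
  have h1 : ContDiffOn ℝ (0 + 1) (fderiv ℝ ψ) B := by norm_num; exact hfd1
  obtain ⟨hdiff1, -, hfd0⟩ := (contDiffOn_succ_iff_fderiv_of_isOpen hBopen).mp h1
  have hcont : ContinuousOn (fderiv ℝ (fderiv ℝ ψ)) B := contDiffOn_zero.mp hfd0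
  -- bound the second derivative on the closed ball of radius ε/2
  have hsub : Metric.closedBall (0 : ℂ) (ε / 2) ⊆ B := by
    apply Metric.closedBall_subset_ball; linarith
  obtain ⟨K, hK⟩ := (isCompact_closedBall (0 : ℂ) (ε / 2)).exists_bound_of_continuousOn
    (E := ℂ →L[ℝ] ℂ →L[ℝ] ℝ) (hcont.mono hsub)
  -- first derivative is K-Lipschitz (relative to 0) on the closed ball
  have hdiff1' : ∀ x ∈ Metric.closedBall (0 : ℂ) (ε / 2),
      DifferentiableAt ℝ (fderiv ℝ ψ) x := fun x hx =>
    (hdiff1.differentiableAt (hBopen.mem_nhds (hsub hx)))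
  have hlip : ∀ w ∈ Metric.closedBall (0 : ℂ) (ε / 2),
      ‖fderiv ℝ ψ w - fderiv ℝ ψ 0‖ ≤ K * ‖w‖ := by
    intro w hw
    have h0 : (0 : ℂ) ∈ Metric.closedBall (0 : ℂ) (ε / 2) := by
      simp [Metric.mem_closedBall]; positivity
    have := (convex_closedBall (0 : ℂ) (ε / 2)).norm_image_sub_le_of_norm_fderiv_le
      hdiff1' hK h0 hw
    simpa using this
  set L := fderiv ℝ ψ 0 with hL
  -- second-order Taylor bound
  have htaylor : ∀ z : ℂ, ‖z‖ ≤ ε / 2 → ‖ψ z - ψ 0 - L z‖ ≤ K * ‖z‖ ^ 2 := by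
    intro z hz
    set g : ℂ → ℝ := fun w => ψ w - L w with hg
    have hzsub : Metric.closedBall (0 : ℂ) ‖z‖ ⊆ Metric.closedBall (0 : ℂ) (ε / 2) :=
      Metric.closedBall_subset_closedBall hz
    have hgd : ∀ w ∈ Metric.closedBall (0 : ℂ) ‖z‖, DifferentiableAt ℝ g w := by
      intro w hw
      exact ((hdiff.differentiableAt (hBopen.mem_nhds (hsub (hzsub hw)))).sub
        (L.differentiableAt))
    have hgfd : ∀ w ∈ Metric.closedBall (0 : ℂ) ‖z‖, ‖fderiv ℝ g w‖ ≤ K * ‖z‖ := by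
      intro w hw
      have hwd : DifferentiableAt ℝ ψ w :=
        hdiff.differentiableAt (hBopen.mem_nhds (hsub (hzsub hw)))
      have : fderiv ℝ g w = fderiv ℝ ψ w - L := by
        rw [hg, fderiv_fun_sub hwd L.differentiableAt, L.fderiv]
      rw [this]
      calc ‖fderiv ℝ ψ w - L‖ ≤ K * ‖w‖ := hlip w (hzsub hw)
        _ ≤ K * ‖z‖ := by
            have hw' : ‖w‖ ≤ ‖z‖ := by simpa using hw
            have hK0 : 0 ≤ K := le_trans (norm_nonneg _) (hK 0 (by
              simp [Metric.mem_closedBall]; positivity))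
            exact mul_le_mul_of_nonneg_left hw' hK0
    have h0 : (0 : ℂ) ∈ Metric.closedBall (0 : ℂ) ‖z‖ := by
      simp [Metric.mem_closedBall]
    have hzz : z ∈ Metric.closedBall (0 : ℂ) ‖z‖ := by
      simp [Metric.mem_closedBall]
    have := (convex_closedBall (0 : ℂ) ‖z‖).norm_image_sub_le_of_norm_fderiv_le
      hgd hgfd h0 hzz
    have hg0 : g 0 = ψ 0 := by simp [hg]
    have hgz : g z = ψ z - L z := rfl
    calc ‖ψ z - ψ 0 - L z‖ = ‖g z - g 0‖ := by rw [hgz, hg0]; ring_nf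
      _ ≤ K * ‖z‖ * ‖z - 0‖ := this
      _ = K * ‖z‖ ^ 2 := by rw [sub_zero]; ring
  -- choose a small real point
  set t : ℝ := min (ε / 2) (Real.exp (-K / 2)) with ht
  have ht0 : 0 < t := lt_min (by positivity) (Real.exp_pos _)
  have htε : t ≤ ε / 2 := min_le_left _ _
  have hlogt : Real.log t ≤ -K / 2 := by
    calc Real.log t ≤ Real.log (Real.exp (-K / 2)) :=
          Real.log_le_log ht0 (min_le_right _ _)
      _ = -K / 2 := Real.log_exp _
  set z : ℂ := (t : ℂ) with hz
  have habs : ‖z‖ = t := by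
    rw [hz]; simp [abs_of_pos ht0]
  have habs' : ‖-z‖ = t := by rw [norm_neg, habs]
  have hnorm : ‖z‖ = t := habs
  have hmemN : z ∈ N := hball (by simp [Metric.mem_closedBall, hnorm]; linarith)
  have hmemN' : -z ∈ N := hball (by
    simp only [Metric.mem_closedBall, dist_zero_right, norm_neg, hnorm]; linarith)
  have hzne : z ≠ 0 := by
    simp only [hz, ne_eq, Complex.ofReal_eq_zero]; exact ne_of_gt ht0
  have hzne' : -z ≠ 0 := neg_ne_zero.mpr hzne
  have hlow1 := h z hmemN hzne
  have hlow2 := h (-z) hmemN' hzne'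
  rw [habs] at hlow1
  rw [habs'] at hlow2
  have hT1 := htaylor z (by rw [hnorm]; exact htε)
  have hT2 := htaylor (-z) (by rw [norm_neg, hnorm]; exact htε)
  have hLneg : L (-z) = -(L z) := map_neg L z
  rw [hLneg] at hT2
  rw [norm_neg, hnorm] at hT2
  rw [hnorm] at hT1
  have hP1 : ψ z - ψ 0 - L z ≤ K * t ^ 2 := le_trans (le_abs_self _) hT1
  have hP2 : ψ (-z) - ψ 0 - -(L z) ≤ K * t ^ 2 := le_trans (le_abs_self _) hT2
  -- combine
  have hsum : 4 * t ^ 2 * (1 - Real.log t) ≤ 2 * K * t ^ 2 := by nlinarith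
  have ht2 : 0 < t ^ 2 := by positivity
  have : 4 * (1 - Real.log t) ≤ 2 * K := by nlinarith
  nlinarith

/-- There is no `C²` function `φ` near `(0, z₂⁰)` with `φ(0,z₂⁰) = 0` lying above
`-(Re z₂)²/log|z₁| + 2|z₁|²(1 - log|z₁|)`; in particular no `C²` function `ψ` of `z₁`
near `0` satisfies `ψ(z₁) ≥ ψ(0) + 2|z₁|²(1 - log|z₁|)`. -/
theorem no_upper_test_function :
    (∀ z₂0 : ℂ, ¬ ∃ (N : Set (ℂ × ℂ)) (φ : ℂ × ℂ → ℝ),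
      N ∈ nhds ((0 : ℂ), z₂0) ∧ ContDiffOn ℝ 2 φ N ∧ φ (0, z₂0) = 0 ∧
      ∀ p ∈ N, p.1 ≠ 0 →
        -(p.2.re) ^ 2 / Real.log (‖p.1‖)
          + 2 * (‖p.1‖) ^ 2 * (1 - Real.log (‖p.1‖)) ≤ φ p) ∧
    (∀ (ψ : ℂ → ℝ) (N : Set ℂ), N ∈ nhds (0 : ℂ) → ContDiffOn ℝ 2 ψ N →
      ¬ ∀ z ∈ N, z ≠ 0 →
        ψ 0 + 2 * (‖z‖) ^ 2 * (1 - Real.log (‖z‖)) ≤ ψ z) := by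
  constructor
  · intro z₂0 ⟨N, φ, hN, hφ, hφ0, hineq⟩
    set e : ℂ → ℂ × ℂ := fun z => (z, z₂0) with he
    have hecont : Continuous e := continuous_id.prodMk continuous_const
    have hecd : ContDiff ℝ 2 e := contDiff_id.prodMk contDiff_const
    set N' : Set ℂ := e ⁻¹' N ∩ Metric.ball 0 1 with hN'
    have hN'mem : N' ∈ nhds (0 : ℂ) := by
      apply Filter.inter_mem
      · exact hecont.continuousAt.preimage_mem_nhds (by simpa [he] using hN)
      · exact Metric.ball_mem_nhds 0 one_pos
    set ψ : ℂ → ℝ := φ ∘ e with hψdef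
    have hψcd : ContDiffOn ℝ 2 ψ N' :=
      hφ.comp (hecd.contDiffOn) (fun z hz => hz.1)
    refine aux_no_psi ψ N' hN'mem hψcd ?_
    intro z hz hzne
    have hψ0 : ψ 0 = 0 := hφ0
    have hmem : e z ∈ N := hz.1
    have hz1 : ‖z‖ < 1 := by
      have := hz.2
      simpa [Metric.mem_ball, Complex.dist_eq] using this
    have hz0 : 0 < ‖z‖ := by
      simpa [AbsoluteValue.pos_iff] using hzne
    have hlog : Real.log (‖z‖) < 0 := Real.log_neg hz0 hz1
    have hkey := hineq (e z) hmem (by simpa [he] using hzne)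
    simp only [he] at hkey
    have hnn : 0 ≤ -(z₂0.re) ^ 2 / Real.log (‖z‖) := by
      rw [div_nonneg_iff]
      exact Or.inr ⟨by nlinarith [sq_nonneg z₂0.re], le_of_lt hlog⟩
    rw [hψ0]
    calc 0 + 2 * (‖z‖) ^ 2 * (1 - Real.log (‖z‖))
        ≤ -(z₂0.re) ^ 2 / Real.log (‖z‖)
          + 2 * (‖z‖) ^ 2 * (1 - Real.log (‖z‖)) := by linarith
      _ ≤ φ (z, z₂0) := hkey
      _ = ψ z := rfl
  · exact aux_no_psi
end

section
/- Let φ be a C² function on a neighborhood of p₀ = (0, z₂⁰) ∈ ℂ² such that φ(z₁,z₂) ≤ φ(0,z₂⁰) - (Re z₂)²/log|z₁| + 2|z₁|²(1 - log|z₁|) for z₁ ≠ 0 in that neighborhood. Then φ(0,z₂) ≤ φ(0,z₂⁰) for all z₂ near z₂⁰, and hence ∂²φ/∂z₂∂z̄₂(p₀) ≤ 0; consequently if the complex Hessian ∂∂̄φ(p₀) is positive semidefinite, then det(∂∂̄φ(p₀)) = 0. -/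
open scoped ComplexOrder
open Filter Set

/-- Second-order necessary condition: at a local max, the second derivative is nonpositive. -/
lemma secondDeriv_nonpos_of_isLocalMax {g g' : ℝ → ℝ} {c : ℝ}
    (hmax : IsLocalMax g 0)
    (hg : ∀ᶠ t in nhds (0:ℝ), HasDerivAt g (g' t) t)
    (hg' : HasDerivAt g' c 0) : c ≤ 0 := by
  by_contra hc
  push_neg at hc
  have hg'0 : g' 0 = 0 := by
    have h0 := hg.self_of_nhds
    have := hmax.deriv_eq_zero
    rwa [h0.deriv] at this
  have hslope : Tendsto (slope g' 0) (nhdsWithin 0 {(0:ℝ)}ᶜ) (nhds c) :=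
    hasDerivAt_iff_tendsto_slope.1 hg'
  have hev : ∀ᶠ t in nhdsWithin 0 {(0:ℝ)}ᶜ, c / 2 < slope g' 0 t :=
    hslope.eventually (eventually_gt_nhds (half_lt_self hc))
  rw [eventually_nhdsWithin_iff] at hev
  obtain ⟨δ, hδ, hball⟩ := Metric.eventually_nhds_iff_ball.1 (hev.and (hg.and hmax))
  set b := δ / 2 with hb
  have hb0 : 0 < b := by positivity
  have hmem : ∀ x ∈ Icc (0:ℝ) b, x ∈ Metric.ball (0:ℝ) δ := by
    intro x hx
    have h1 := hx.1; have h2 := hx.2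
    rw [Metric.mem_ball, Real.dist_eq, sub_zero, abs_of_nonneg h1]
    rw [hb] at h2; linarith
  have hcont : ContinuousOn g (Icc 0 b) := fun x hx =>
    ((hball x (hmem x hx)).2.1).continuousAt.continuousWithinAt
  obtain ⟨ξ, hξ, hslopeξ⟩ := exists_hasDerivAt_eq_slope g g' hb0 hcont
    (fun x hx => (hball x (hmem x (Ioo_subset_Icc_self hx))).2.1)
  have hξball : ξ ∈ Metric.ball (0:ℝ) δ := hmem ξ (Ioo_subset_Icc_self hξ)
  have hξne : ξ ≠ 0 := ne_of_gt hξ.1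
  have h1 : c / 2 < slope g' 0 ξ := (hball ξ hξball).1 hξne
  have h2 : g b ≤ g 0 := (hball b (hmem b ⟨le_of_lt hb0, le_refl b⟩)).2.2
  have hgξpos : 0 < g' ξ := by
    have hs : slope g' 0 ξ = g' ξ / ξ := by
      rw [slope_def_field, hg'0]; field_simp; ring
    rw [hs] at h1
    have hpos : 0 < g' ξ / ξ := lt_trans (by positivity) h1
    rcases div_pos_iff.1 hpos with ⟨h, _⟩ | ⟨_, h⟩
    · exact h
    · exact absurd hξ.1 (by linarith)
  have : g' ξ ≤ 0 := by
    rw [hslopeξ, sub_zero]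
    exact div_nonpos_of_nonpos_of_nonneg (by linarith) (le_of_lt hb0)
  linarith


/-- A 2×2 positive semidefinite Hermitian matrix whose bottom-right entry has
nonpositive real part has vanishing determinant. -/
lemma psd_det_zero_of_entry_nonpos (M : Matrix (Fin 2) (Fin 2) ℂ) (hM : M.PosSemidef)
    (hre11 : (M 1 1).re ≤ 0) : M.det = 0 := by
  have h11 : (0:ℂ) ≤ M 1 1 := by
    have := hM.dotProduct_mulVec_nonneg (Pi.single 1 1)
    simpa [dotProduct, Matrix.mulVec, Fin.sum_univ_two, Pi.single_apply] using this
  have h110 : M 1 1 = 0 := by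
    rw [Complex.le_def] at h11
    obtain ⟨ha, hbim⟩ := h11
    simp only [Complex.zero_re, Complex.zero_im] at ha hbim
    apply Complex.ext
    · simp only [Complex.zero_re]; linarith
    · simp [← hbim]
  have hherm := hM.1
  have h10 : M 1 0 = star (M 0 1) := by
    have := congrArg (fun m : Matrix (Fin 2) (Fin 2) ℂ => m 1 0) hherm
    simpa [Matrix.conjTranspose_apply] using this.symm
  have hb : M 0 1 = 0 := by
    by_contra hb
    set b := M 0 1 with hbdef
    have hbpos : (0:ℝ) < Complex.normSq b := by
      simpa [Complex.normSq_pos] using hb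
    set t : ℝ := -((M 0 0).re + 1) with ht
    have hq := hM.dotProduct_mulVec_nonneg ![b, (t:ℂ)]
    have hqval : dotProduct (star ![b, (t:ℂ)]) (M.mulVec ![b, (t:ℂ)])
        = M 0 0 * Complex.normSq b + 2 * t * Complex.normSq b := by
      simp [dotProduct, Matrix.mulVec, Fin.sum_univ_two, h110, h10]
      have hcb : (starRingEnd ℂ) b * b = ((Complex.normSq b : ℝ) : ℂ) := by
        rw [mul_comm, Complex.mul_conj]
      push_cast
      linear_combination (M 0 0 + 2 * (t:ℂ)) * hcb
    rw [hqval, Complex.le_def] at hq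
    have hre' := hq.1
    simp [Complex.add_re, Complex.mul_re] at hre'
    have h00 : (0:ℂ) ≤ M 0 0 := by
      have := hM.dotProduct_mulVec_nonneg (Pi.single 0 1)
      simpa [dotProduct, Matrix.mulVec, Fin.sum_univ_two, Pi.single_apply] using this
    rw [Complex.le_def] at h00
    have h00re : 0 ≤ (M 0 0).re := by simpa using h00.1
    rw [ht] at hre'
    nlinarith [hre', hbpos, h00re]
  rw [Matrix.det_fin_two, h110, h10, hb]
  simp

/-- If `φ` is `C²` near `p₀ = (0,z₂⁰)` and lies below
`φ(0,z₂⁰) - (Re z₂)²/log|z₁| + 2|z₁|²(1 - log|z₁|)`, then `φ(0,·)` has a local max at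
`z₂⁰`, hence `φ_{2 2̄}(p₀) ≤ 0`; consequently if `∂∂̄φ(p₀) ≥ 0` then `det(∂∂̄φ(p₀)) = 0`. -/
theorem lower_test_function_det_zero (z₂0 : ℂ) (φ : ℂ × ℂ → ℝ) (N : Set (ℂ × ℂ))
    (hN : N ∈ nhds ((0 : ℂ), z₂0)) (hφ : ContDiffOn ℝ 2 φ N)
    (hineq : ∀ p ∈ N, p.1 ≠ 0 →
      φ p ≤ φ (0, z₂0) - (p.2.re) ^ 2 / Real.log (‖p.1‖)
        + 2 * (‖p.1‖) ^ 2 * (1 - Real.log (‖p.1‖))) :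
    (∀ᶠ z₂ in nhds z₂0, φ (0, z₂) ≤ φ (0, z₂0)) ∧
    (wd2 (wd2b fun z => (φ z : ℂ)) ((0 : ℂ), z₂0)).re ≤ 0 ∧
    ((cHess (fun z => (φ z : ℂ)) ((0 : ℂ), z₂0)).PosSemidef →
      (cHess (fun z => (φ z : ℂ)) ((0 : ℂ), z₂0)).det = 0) := by
  set U := interior N with hUdef
  have hU : IsOpen U := isOpen_interior
  have hpU : ((0:ℂ), z₂0) ∈ U := mem_interior_iff_mem_nhds.2 hN
  have hφU : ContDiffOn ℝ 2 φ U := hφ.mono interior_subset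
  -- Part 1 : local maximum of `φ(0, ·)` at `z₂0`
  have h1 : ∀ᶠ z₂ in nhds z₂0, φ (0, z₂) ≤ φ (0, z₂0) := by
    have hcont0 : Continuous (fun z₂ : ℂ => ((0:ℂ), z₂)) := continuous_const.prodMk continuous_id
    have hev : ∀ᶠ z₂ in nhds z₂0, ((0:ℂ), z₂) ∈ U :=
      hcont0.continuousAt.preimage_mem_nhds (hU.mem_nhds hpU)
    filter_upwards [hev] with z₂ hz₂
    set l := nhdsWithin (0:ℝ) (Set.Ioi 0) with hl
    have hF : Tendsto (fun t : ℝ => (((t:ℝ):ℂ), z₂)) l (nhds ((0:ℂ), z₂)) := by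
      have h0 : Tendsto (fun t : ℝ => (((t:ℝ):ℂ), z₂)) (nhds 0) (nhds ((0:ℂ), z₂)) := by
        have h1' : Tendsto (fun t : ℝ => ((t:ℝ):ℂ)) (nhds 0) (nhds (0:ℂ)) := by
          simpa using Complex.continuous_ofReal.tendsto 0
        exact h1'.prodMk_nhds tendsto_const_nhds
      exact h0.mono_left nhdsWithin_le_nhds
    have hFU : ∀ᶠ t in l, (((t:ℝ):ℂ), z₂) ∈ U := hF.eventually (hU.eventually_mem hz₂)
    have hLHS : Tendsto (fun t : ℝ => φ (((t:ℝ):ℂ), z₂)) l (nhds (φ ((0:ℂ), z₂))) :=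
      (hφU.continuousOn.continuousAt (hU.mem_nhds hz₂)).tendsto.comp hF
    have hlog : Tendsto Real.log l atBot := Real.tendsto_log_nhdsGT_zero
    have hT1 : Tendsto (fun t : ℝ => (z₂.re) ^ 2 / Real.log t) l (nhds 0) := by
      have hneg : Tendsto (fun t : ℝ => -Real.log t) l atTop :=
        tendsto_neg_atBot_atTop.comp hlog
      have hinv : Tendsto (fun t : ℝ => (-Real.log t)⁻¹) l (nhds 0) := hneg.inv_tendsto_atTop
      have h := (hinv.const_mul ((z₂.re) ^ 2)).neg
      have h2 : Tendsto (fun t : ℝ => -((z₂.re) ^ 2 * (-Real.log t)⁻¹)) l (nhds 0) := by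
        simpa using h
      refine h2.congr fun t => ?_
      rw [inv_neg]; ring
    have hT2 : Tendsto (fun t : ℝ => 2 * t ^ 2 * (1 - Real.log t)) l (nhds 0) := by
      have ha : Tendsto (fun t : ℝ => t ^ 2) l (nhds 0) := by
        have h0 : Tendsto (fun t : ℝ => t ^ 2) (nhds 0) (nhds 0) := by
          simpa using (continuous_pow 2).tendsto (0:ℝ)
        exact h0.mono_left nhdsWithin_le_nhds
      have hb : Tendsto (fun t : ℝ => Real.log t * t ^ (2:ℝ)) l (nhds 0) :=
        tendsto_log_mul_rpow_nhdsGT_zero two_pos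
      have hb' : Tendsto (fun t : ℝ => Real.log t * t ^ 2) l (nhds 0) := by
        refine hb.congr' ?_
        filter_upwards [self_mem_nhdsWithin] with t _
        rw [Real.rpow_two]
      have h := (ha.const_mul 2).sub ((hb'.const_mul 2))
      have h2 : Tendsto (fun t : ℝ => 2 * t ^ 2 - 2 * (Real.log t * t ^ 2)) l (nhds 0) := by
        simpa using h
      refine h2.congr fun t => ?_
      ring
    have hRHS : Tendsto
        (fun t : ℝ => φ ((0:ℂ), z₂0) - (z₂.re) ^ 2 / Real.log t + 2 * t ^ 2 * (1 - Real.log t))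
        l (nhds (φ ((0:ℂ), z₂0))) := by
      have := (tendsto_const_nhds (x := φ ((0:ℂ), z₂0)) (f := l)).sub hT1 |>.add hT2
      simpa using this
    refine le_of_tendsto_of_tendsto hLHS hRHS ?_
    filter_upwards [hFU, self_mem_nhdsWithin] with t htU (ht : t ∈ Set.Ioi 0)
    have ht0 : (0:ℝ) < t := ht
    have hne : ((t:ℝ):ℂ) ≠ 0 := by
      simp only [ne_eq, Complex.ofReal_eq_zero]
      exact ne_of_gt ht0
    have := hineq _ (interior_subset htU) hne
    simpa [Complex.norm_real, Real.norm_eq_abs, abs_of_pos ht0] using this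
  -- Part 2 : `(∂²φ/∂z₂∂z̄₂)(p₀)` has nonpositive real part
  set p₀ : ℂ × ℂ := ((0:ℂ), z₂0) with hp₀
  set f : ℂ × ℂ → ℂ := fun z => (φ z : ℂ) with hf
  set D := fderiv ℝ φ with hD
  have hDiff : ∀ z ∈ U, DifferentiableAt ℝ φ z := fun z hz =>
    (hφU.contDiffAt (hU.mem_nhds hz)).differentiableAt two_ne_zero
  have hDC1 : ContDiffOn ℝ 1 D U := by
    have h2 : ContDiffOn ℝ (1 + 1) φ U := by
      convert hφU using 2 <;> norm_num
    exact ((contDiffOn_succ_iff_fderiv_of_isOpen hU).1 h2).2.2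
  have hDDiff : DifferentiableAt ℝ D p₀ :=
    (hDC1.contDiffAt (hU.mem_nhds hpU)).differentiableAt one_ne_zero
  set A := fderiv ℝ D p₀ with hA
  have hAd : HasFDerivAt D A p₀ := hDDiff.hasFDerivAt
  have hEv : ∀ v : ℂ × ℂ, HasFDerivAt (fun z => ((D z v : ℝ) : ℂ))
      (Complex.ofRealCLM.comp ((ContinuousLinearMap.apply ℝ ℝ v).comp A)) p₀ := fun v =>
    Complex.ofRealCLM.hasFDerivAt.comp p₀
      (((ContinuousLinearMap.apply ℝ ℝ v).hasFDerivAt).comp p₀ hAd)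
  set e₁ : ℂ × ℂ := ((0:ℂ), (1:ℂ)) with he₁
  set e₂ : ℂ × ℂ := ((0:ℂ), Complex.I) with he₂
  set G : ℂ × ℂ → ℂ := fun z =>
      (2⁻¹ : ℂ) • (((D z e₁ : ℝ) : ℂ) + Complex.I * ((D z e₂ : ℝ) : ℂ)) with hGdef
  have hG : HasFDerivAt G
      ((2⁻¹ : ℂ) • (Complex.ofRealCLM.comp ((ContinuousLinearMap.apply ℝ ℝ e₁).comp A) +
        Complex.I • Complex.ofRealCLM.comp ((ContinuousLinearMap.apply ℝ ℝ e₂).comp A)))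
      p₀ := ((hEv e₁).add ((hEv e₂).const_mul Complex.I)).const_smul (2⁻¹ : ℂ)
  have hfd : ∀ z ∈ U, fderiv ℝ f z = Complex.ofRealCLM.comp (D z) := fun z hz =>
    (Complex.ofRealCLM.hasFDerivAt.comp z (hDiff z hz).hasFDerivAt).fderiv
  have hwEq : wd2b f =ᶠ[nhds p₀] G := by
    filter_upwards [hU.eventually_mem hpU] with z hz
    simp only [wd2b, hfd z hz, hGdef, ContinuousLinearMap.comp_apply,
      Complex.ofRealCLM_apply, smul_eq_mul, he₁, he₂]
    ring
  have hfderiv_eq : fderiv ℝ (wd2b f) p₀ =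
      (2⁻¹ : ℂ) • (Complex.ofRealCLM.comp ((ContinuousLinearMap.apply ℝ ℝ e₁).comp A) +
        Complex.I • Complex.ofRealCLM.comp ((ContinuousLinearMap.apply ℝ ℝ e₂).comp A)) := by
    rw [hwEq.fderiv_eq, hG.fderiv]
  have hGval : ∀ w : ℂ × ℂ, fderiv ℝ (wd2b f) p₀ w
      = (((A w e₁ : ℝ) : ℂ) + Complex.I * ((A w e₂ : ℝ) : ℂ)) / 2 := by
    intro w
    rw [hfderiv_eq]
    simp only [ContinuousLinearMap.smul_apply, ContinuousLinearMap.add_apply,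
      ContinuousLinearMap.comp_apply, ContinuousLinearMap.apply_apply,
      Complex.ofRealCLM_apply, smul_eq_mul]
    ring
  have hwd2 : wd2 (wd2b f) p₀
      = (((A e₁ e₁ : ℝ) : ℂ) + ((A e₂ e₂ : ℝ) : ℂ)
          + (((A e₁ e₂ : ℝ) : ℂ) - ((A e₂ e₁ : ℝ) : ℂ)) * Complex.I) / 4 := by
    rw [wd2, hGval, hGval]
    field_simp
    ring_nf
    rw [Complex.I_sq]
    try ring
  have hre : (wd2 (wd2b f) p₀).re = (A e₁ e₁ + A e₂ e₂) / 4 := by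
    rw [hwd2]
    simp [Complex.div_re, Complex.add_re, Complex.mul_re]
    try ring
  have key : ∀ u : ℂ, A ((0:ℂ), u) ((0:ℂ), u) ≤ 0 := by
    intro u
    set v : ℂ × ℂ := ((0:ℂ), u) with hv
    set L : ℝ → ℂ × ℂ := fun t => p₀ + t • v with hL
    have hLd : ∀ t : ℝ, HasDerivAt L v t := by
      intro t
      have := ((hasDerivAt_id t).smul_const v).const_add p₀
      simpa only [id, one_smul] using this
    have hL0 : L 0 = p₀ := by simp [hL]
    have hLcont : Continuous L := by
      have : Continuous fun t : ℝ => p₀ + t • v := by fun_prop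
      exact this
    have hU0 : ∀ᶠ t in nhds (0:ℝ), L t ∈ U := by
      have : ContinuousAt L 0 := hLcont.continuousAt
      apply this.preimage_mem_nhds
      rw [hL0]; exact hU.mem_nhds hpU
    set g : ℝ → ℝ := fun t => φ (L t) with hg
    set g' : ℝ → ℝ := fun t => D (L t) v with hg'
    have hgd : ∀ᶠ t in nhds (0:ℝ), HasDerivAt g (g' t) t := by
      filter_upwards [hU0] with t ht
      exact (hDiff _ ht).hasFDerivAt.comp_hasDerivAt t (hLd t)
    have hg'd : HasDerivAt g' (A v v) 0 := by
      have hDv : HasFDerivAt (fun z => D z v) ((ContinuousLinearMap.apply ℝ ℝ v).comp A) p₀ :=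
        ((ContinuousLinearMap.apply ℝ ℝ v).hasFDerivAt).comp p₀ hAd
      rw [← hL0] at hDv
      have := hDv.comp_hasDerivAt 0 (hLd 0)
      exact this
    have hmax : IsLocalMax g 0 := by
      have hcm : Tendsto (fun t : ℝ => z₂0 + t • u) (nhds 0) (nhds z₂0) := by
        have hc : Continuous fun t : ℝ => z₂0 + t • u := by fun_prop
        have h := hc.tendsto 0
        simpa using h
      have hev2 := hcm.eventually h1
      unfold IsLocalMax IsMaxFilter
      filter_upwards [hev2] with t ht
      show φ (L t) ≤ φ (L 0)
      have hLt : L t = ((0:ℂ), z₂0 + t • u) := by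
        simp [hL, hv, hp₀, Prod.ext_iff]
      rw [hLt, hL0]
      exact ht
    exact secondDeriv_nonpos_of_isLocalMax hmax hgd hg'd
  have k1 := key 1
  have k2 := key Complex.I
  rw [he₁, he₂] at hre
  have h2 : (wd2 (wd2b f) p₀).re ≤ 0 := by
    rw [hre]; linarith
  refine ⟨h1, h2, ?_⟩
  -- Part 3 : determinant vanishes
  intro hM
  refine psd_det_zero_of_entry_nonpos _ hM ?_
  have hM11 : cHess f p₀ 1 1 = wd2 (wd2b f) p₀ := by
    simp [cHess]
  rw [hM11]
  exact h2
end

section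
/- For β ∈ [0,1) and ε > 0, the smooth function v^ε(z₁,z₂) = c₂(1-β)^{-1}(|z₂|² + ε)^{1/2}((|z₁|² + ε)^{β/2} + (|z₁|² + ε)^{1-β/2}) on ℂ² (with c₂ = 2^{3/2} for n = 2, i.e. K = 2/(1-β) after normalization) has positive semidefinite complex Hessian; in particular v^ε is plurisubharmonic on ℂ². -/
open scoped ComplexOrder

/-- `v^ε(z₁,z₂) = (2/(1-β)) √(|z₂|²+ε) ((|z₁|²+ε)^{β/2} + (|z₁|²+ε)^{1-β/2})`. -/
noncomputable def vE (β ε : ℝ) (z : ℂ × ℂ) : ℝ :=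
  (2 / (1 - β)) * Real.sqrt (‖z.2‖ ^ 2 + ε) *
    ((‖z.1‖ ^ 2 + ε) ^ (β / 2) + (‖z.1‖ ^ 2 + ε) ^ (1 - β / 2))

/-! ### derivative machinery -/

noncomputable def nsd (z : ℂ) : ℂ →L[ℝ] ℝ :=
  (2*z.re) • Complex.reCLM + (2*z.im) • Complex.imCLM

lemma hasFDerivAt_normSq' (z : ℂ) : HasFDerivAt Complex.normSq (nsd z) z := by
  have h := ((Complex.reCLM.hasFDerivAt (x := z)).mul (Complex.reCLM.hasFDerivAt)).add
    ((Complex.imCLM.hasFDerivAt (x := z)).mul (Complex.imCLM.hasFDerivAt))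
  have e1 : (fun y : ℂ => Complex.reCLM y * Complex.reCLM y + Complex.imCLM y * Complex.imCLM y)
      = Complex.normSq := by
    funext y; simp [Complex.normSq_apply]
  rw [show (⇑Complex.reCLM * ⇑Complex.reCLM + ⇑Complex.imCLM * ⇑Complex.imCLM : ℂ → ℝ) = _ from e1] at h
  refine h.congr_fderiv ?_
  ext v <;> simp [nsd] <;> ring

lemma nsd_apply (z v : ℂ) : nsd z v = 2*z.re*v.re + 2*z.im*v.im := by
  simp [nsd]

noncomputable def FD (g h : ℝ → ℝ) (g' h' : ℝ) (ε : ℝ) (w : ℂ × ℂ) : (ℂ × ℂ) →L[ℝ] ℂ :=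
  Complex.ofRealCLM.comp
    (g (Complex.normSq w.2 + ε) • (h' • ((nsd w.1).comp (ContinuousLinearMap.fst ℝ ℂ ℂ))) +
     h (Complex.normSq w.1 + ε) • (g' • ((nsd w.2).comp (ContinuousLinearMap.snd ℝ ℂ ℂ))))

lemma hasFDerivAt_F (g h : ℝ → ℝ) (g' h' : ℝ) (ε : ℝ) (w : ℂ × ℂ)
    (hg : HasDerivAt g g' (Complex.normSq w.2 + ε))
    (hh : HasDerivAt h h' (Complex.normSq w.1 + ε)) :
    HasFDerivAt (fun p : ℂ × ℂ =>
        ((g (Complex.normSq p.2 + ε) * h (Complex.normSq p.1 + ε) : ℝ) : ℂ))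
      (FD g h g' h' ε w) w := by
  have hS2 : HasFDerivAt (fun p : ℂ × ℂ => Complex.normSq p.2 + ε)
      ((nsd w.2).comp (ContinuousLinearMap.snd ℝ ℂ ℂ)) w :=
    (((hasFDerivAt_normSq' w.2).comp w (hasFDerivAt_snd))).add_const ε
  have hS1 : HasFDerivAt (fun p : ℂ × ℂ => Complex.normSq p.1 + ε)
      ((nsd w.1).comp (ContinuousLinearMap.fst ℝ ℂ ℂ)) w :=
    (((hasFDerivAt_normSq' w.1).comp w (hasFDerivAt_fst))).add_const ε
  exact Complex.ofRealCLM.hasFDerivAt.comp w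
    ((hg.comp_hasFDerivAt w hS2).mul (hh.comp_hasFDerivAt w hS1))

lemma FD_apply (g h : ℝ → ℝ) (g' h' : ℝ) (ε : ℝ) (w : ℂ × ℂ) (v : ℂ × ℂ) :
    FD g h g' h' ε w v =
      ((g (Complex.normSq w.2 + ε) * (h' * (2*w.1.re*v.1.re + 2*w.1.im*v.1.im)) +
        h (Complex.normSq w.1 + ε) * (g' * (2*w.2.re*v.2.re + 2*w.2.im*v.2.im)) : ℝ) : ℂ) := by
  simp [FD, nsd_apply]
  push_cast
  ring

/-- first Wirtinger derivatives of `F = g(|z₂|²+ε) h(|z₁|²+ε)` -/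
lemma wd1b_F (g h : ℝ → ℝ) (g' h' : ℝ → ℝ) (ε : ℝ)
    (hg : ∀ x, 0 < x → HasDerivAt g (g' x) x)
    (hh : ∀ x, 0 < x → HasDerivAt h (h' x) x) (hε : 0 < ε) (w : ℂ × ℂ) :
    wd1b (fun p : ℂ × ℂ =>
        ((g (Complex.normSq p.2 + ε) * h (Complex.normSq p.1 + ε) : ℝ) : ℂ)) w =
      ((g (Complex.normSq w.2 + ε) * h' (Complex.normSq w.1 + ε) : ℝ) : ℂ) * w.1 := by
  have h1 : (0:ℝ) < Complex.normSq w.1 + ε := add_pos_of_nonneg_of_pos (Complex.normSq_nonneg _) hε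
  have h2 : (0:ℝ) < Complex.normSq w.2 + ε := add_pos_of_nonneg_of_pos (Complex.normSq_nonneg _) hε
  have hF := hasFDerivAt_F g h (g' _) (h' _) ε w (hg _ h2) (hh _ h1)
  rw [wd1b, hF.fderiv]
  rw [FD_apply, FD_apply]
  simp only [Complex.I_re, Complex.I_im, Complex.one_re, Complex.one_im]
  have hw : (w.1 : ℂ) = (w.1.re : ℝ) + (w.1.im : ℝ) * Complex.I := (Complex.re_add_im w.1).symm
  rw [hw]; push_cast; ring_nf
  simp [Complex.ext_iff]; constructor <;> ring

lemma wd2b_F (g h : ℝ → ℝ) (g' h' : ℝ → ℝ) (ε : ℝ)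
    (hg : ∀ x, 0 < x → HasDerivAt g (g' x) x)
    (hh : ∀ x, 0 < x → HasDerivAt h (h' x) x) (hε : 0 < ε) (w : ℂ × ℂ) :
    wd2b (fun p : ℂ × ℂ =>
        ((g (Complex.normSq p.2 + ε) * h (Complex.normSq p.1 + ε) : ℝ) : ℂ)) w =
      ((g' (Complex.normSq w.2 + ε) * h (Complex.normSq w.1 + ε) : ℝ) : ℂ) * w.2 := by
  have h1 : (0:ℝ) < Complex.normSq w.1 + ε := add_pos_of_nonneg_of_pos (Complex.normSq_nonneg _) hε
  have h2 : (0:ℝ) < Complex.normSq w.2 + ε := add_pos_of_nonneg_of_pos (Complex.normSq_nonneg _) hε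
  have hF := hasFDerivAt_F g h (g' _) (h' _) ε w (hg _ h2) (hh _ h1)
  rw [wd2b, hF.fderiv]
  rw [FD_apply, FD_apply]
  simp only [Complex.I_re, Complex.I_im, Complex.one_re, Complex.one_im]
  have hw : (w.2 : ℂ) = (w.2.re : ℝ) + (w.2.im : ℝ) * Complex.I := (Complex.re_add_im w.2).symm
  rw [hw]; push_cast; ring_nf
  simp [Complex.ext_iff]; constructor <;> ring

/-! ### second derivatives -/

section second
variable (p q : ℝ → ℝ) (p' q' : ℝ → ℝ) (ε : ℝ)

lemma wd_mulFst (hp : ∀ x, 0 < x → HasDerivAt p (p' x) x)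
    (hq : ∀ x, 0 < x → HasDerivAt q (q' x) x) (hε : 0 < ε) (z : ℂ × ℂ) :
    wd1 (fun w : ℂ × ℂ =>
        ((p (Complex.normSq w.2 + ε) * q (Complex.normSq w.1 + ε) : ℝ) : ℂ) * w.1) z =
      ((p (Complex.normSq z.2 + ε) * q (Complex.normSq z.1 + ε) +
        p (Complex.normSq z.2 + ε) * q' (Complex.normSq z.1 + ε) * Complex.normSq z.1 : ℝ) : ℂ)
    ∧
    wd2 (fun w : ℂ × ℂ =>
        ((p (Complex.normSq w.2 + ε) * q (Complex.normSq w.1 + ε) : ℝ) : ℂ) * w.1) z =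
      ((p' (Complex.normSq z.2 + ε) * q (Complex.normSq z.1 + ε) : ℝ) : ℂ) * z.1 *
        (starRingEnd ℂ) z.2 := by
  have h1 : (0:ℝ) < Complex.normSq z.1 + ε := add_pos_of_nonneg_of_pos (Complex.normSq_nonneg _) hε
  have h2 : (0:ℝ) < Complex.normSq z.2 + ε := add_pos_of_nonneg_of_pos (Complex.normSq_nonneg _) hε
  have hP := hasFDerivAt_F p q (p' _) (q' _) ε z (hp _ h2) (hq _ h1)
  have hmul : HasFDerivAt (fun w : ℂ × ℂ =>
      ((p (Complex.normSq w.2 + ε) * q (Complex.normSq w.1 + ε) : ℝ) : ℂ) * w.1) _ z :=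
    hP.mul (hasFDerivAt_fst (𝕜 := ℝ) (p := z) (E := ℂ) (F := ℂ))
  constructor
  · rw [wd1, hmul.fderiv]
    simp only [ContinuousLinearMap.add_apply, ContinuousLinearMap.smul_apply,
      ContinuousLinearMap.coe_fst', smul_eq_mul, FD_apply]
    simp only [Complex.I_re, Complex.I_im, Complex.one_re, Complex.one_im]
    have hw : (z.1 : ℂ) = (z.1.re : ℝ) + (z.1.im : ℝ) * Complex.I := (Complex.re_add_im z.1).symm
    rw [hw]
    simp [Complex.ext_iff, Complex.normSq_apply]; constructor <;> ring
  · rw [wd2, hmul.fderiv]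
    simp only [ContinuousLinearMap.add_apply, ContinuousLinearMap.smul_apply,
      ContinuousLinearMap.coe_fst', smul_eq_mul, FD_apply]
    simp only [Complex.I_re, Complex.I_im, Complex.one_re, Complex.one_im]
    have hw : (z.1 : ℂ) = (z.1.re : ℝ) + (z.1.im : ℝ) * Complex.I := (Complex.re_add_im z.1).symm
    rw [hw]
    simp [Complex.ext_iff, Complex.normSq_apply]; constructor <;> ring

lemma wd_mulSnd (hp : ∀ x, 0 < x → HasDerivAt p (p' x) x)
    (hq : ∀ x, 0 < x → HasDerivAt q (q' x) x) (hε : 0 < ε) (z : ℂ × ℂ) :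
    wd1 (fun w : ℂ × ℂ =>
        ((p (Complex.normSq w.2 + ε) * q (Complex.normSq w.1 + ε) : ℝ) : ℂ) * w.2) z =
      ((p (Complex.normSq z.2 + ε) * q' (Complex.normSq z.1 + ε) : ℝ) : ℂ) *
        (starRingEnd ℂ) z.1 * z.2
    ∧
    wd2 (fun w : ℂ × ℂ =>
        ((p (Complex.normSq w.2 + ε) * q (Complex.normSq w.1 + ε) : ℝ) : ℂ) * w.2) z =
      ((p (Complex.normSq z.2 + ε) * q (Complex.normSq z.1 + ε) +
        p' (Complex.normSq z.2 + ε) * q (Complex.normSq z.1 + ε) * Complex.normSq z.2 : ℝ) : ℂ) := by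
  have h1 : (0:ℝ) < Complex.normSq z.1 + ε := add_pos_of_nonneg_of_pos (Complex.normSq_nonneg _) hε
  have h2 : (0:ℝ) < Complex.normSq z.2 + ε := add_pos_of_nonneg_of_pos (Complex.normSq_nonneg _) hε
  have hP := hasFDerivAt_F p q (p' _) (q' _) ε z (hp _ h2) (hq _ h1)
  have hmul : HasFDerivAt (fun w : ℂ × ℂ =>
      ((p (Complex.normSq w.2 + ε) * q (Complex.normSq w.1 + ε) : ℝ) : ℂ) * w.2) _ z :=
    hP.mul (hasFDerivAt_snd (𝕜 := ℝ) (p := z) (E := ℂ) (F := ℂ))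
  constructor
  · rw [wd1, hmul.fderiv]
    simp only [ContinuousLinearMap.add_apply, ContinuousLinearMap.smul_apply,
      ContinuousLinearMap.coe_snd', smul_eq_mul, FD_apply]
    simp only [Complex.I_re, Complex.I_im, Complex.one_re, Complex.one_im]
    have hw : (z.2 : ℂ) = (z.2.re : ℝ) + (z.2.im : ℝ) * Complex.I := (Complex.re_add_im z.2).symm
    rw [hw]
    simp [Complex.ext_iff, Complex.normSq_apply]; constructor <;> ring
  · rw [wd2, hmul.fderiv]
    simp only [ContinuousLinearMap.add_apply, ContinuousLinearMap.smul_apply,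
      ContinuousLinearMap.coe_snd', smul_eq_mul, FD_apply]
    simp only [Complex.I_re, Complex.I_im, Complex.one_re, Complex.one_im]
    have hw : (z.2 : ℂ) = (z.2.re : ℝ) + (z.2.im : ℝ) * Complex.I := (Complex.re_add_im z.2).symm
    rw [hw]
    simp [Complex.ext_iff, Complex.normSq_apply]; constructor <;> ring

end second

-- derivative lemmas
lemma hasDerivAt_g (C : ℝ) {x : ℝ} (hx : 0 < x) :
    HasDerivAt (fun x => C * Real.sqrt x) (C / (2 * Real.sqrt x)) x := by
  have := (Real.hasDerivAt_sqrt hx.ne').const_mul C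
  refine this.congr_deriv ?_
  rw [mul_one_div]

lemma hasDerivAt_gd (C : ℝ) {x : ℝ} (hx : 0 < x) :
    HasDerivAt (fun x => C / (2 * Real.sqrt x)) (-(C / (4 * (x * Real.sqrt x)))) x := by
  have hs : Real.sqrt x ≠ 0 := by positivity
  have h2 : (2 : ℝ) * Real.sqrt x ≠ 0 := by positivity
  have h := (((Real.hasDerivAt_sqrt hx.ne').const_mul (2:ℝ)).inv h2).const_mul C
  have e : (fun x => C / (2 * Real.sqrt x)) = fun x => C * (2 * Real.sqrt x)⁻¹ := by
    funext y; rw [div_eq_mul_inv]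
  rw [e]
  refine h.congr_deriv ?_
  have hsq : Real.sqrt x ^ 2 = x := Real.sq_sqrt hx.le
  field_simp
  linear_combination (4 * C) * hsq

lemma hasDerivAt_h (a b : ℝ) {x : ℝ} (hx : 0 < x) :
    HasDerivAt (fun x : ℝ => x ^ a + x ^ b)
      (a * x ^ (a-1) + b * x ^ (b-1)) x :=
  (Real.hasDerivAt_rpow_const (Or.inl hx.ne')).add
    (Real.hasDerivAt_rpow_const (Or.inl hx.ne'))

lemma hasDerivAt_hd (a b : ℝ) {x : ℝ} (hx : 0 < x) :
    HasDerivAt (fun x : ℝ => a * x ^ (a-1) + b * x ^ (b-1))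
      (a * (a-1) * x ^ (a-2) + b * (b-1) * x ^ (b-2)) x := by
  have h := ((Real.hasDerivAt_rpow_const (p := a-1) (Or.inl hx.ne')).const_mul a).add
    ((Real.hasDerivAt_rpow_const (p := b-1) (Or.inl hx.ne')).const_mul b)
  refine h.congr_deriv ?_
  have e1 : a - 1 - 1 = a - 2 := by ring
  have e2 : b - 1 - 1 = b - 2 := by ring
  rw [e1, e2]; ring

lemma posSemidef_aux (A c D : ℝ) (z1 z2 : ℂ) (hA : 0 ≤ A) (hD : 0 ≤ D) (hc : 0 ≤ c)
    (hAD : c^2 * (Complex.normSq z1 * Complex.normSq z2) ≤ A * D) :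
    (!![(A:ℂ), (c:ℂ) * (starRingEnd ℂ) z1 * z2; (c:ℂ) * z1 * (starRingEnd ℂ) z2,
        (D:ℂ)]).PosSemidef := by
  rw [Matrix.posSemidef_iff_dotProduct_mulVec]
  constructor
  · rw [Matrix.IsHermitian]
    ext i j
    fin_cases i <;> fin_cases j <;>
      simp [Matrix.conjTranspose_apply, Complex.ext_iff] <;> ring
  · intro x
    have key : dotProduct (star x)
        ((!![(A:ℂ), (c:ℂ) * (starRingEnd ℂ) z1 * z2; (c:ℂ) * z1 * (starRingEnd ℂ) z2,
          (D:ℂ)]).mulVec x) =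
        ((A * Complex.normSq (x 0) + D * Complex.normSq (x 1) +
          2 * c * (((starRingEnd ℂ) z1 * z2 * (starRingEnd ℂ) (x 0) * x 1).re) : ℝ) : ℂ) := by
      simp [dotProduct, Matrix.mulVec, Fin.sum_univ_two, Complex.ext_iff,
        Complex.normSq_apply]
      constructor <;> ring
    rw [key]
    rw [Complex.zero_le_real]
    set R := ((starRingEnd ℂ) z1 * z2 * (starRingEnd ℂ) (x 0) * x 1).re with hR
    set t1 := Complex.normSq z1
    set t2 := Complex.normSq z2
    set n0 := Complex.normSq (x 0)
    set n1 := Complex.normSq (x 1)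
    have ht1 : 0 ≤ t1 := Complex.normSq_nonneg _
    have ht2 : 0 ≤ t2 := Complex.normSq_nonneg _
    have hn0 : 0 ≤ n0 := Complex.normSq_nonneg _
    have hn1 : 0 ≤ n1 := Complex.normSq_nonneg _
    have hRsq : R^2 ≤ t1 * t2 * n0 * n1 := by
      have h1 : R^2 ≤ Complex.normSq ((starRingEnd ℂ) z1 * z2 * (starRingEnd ℂ) (x 0) * x 1) := by
        rw [Complex.normSq_apply]; nlinarith [sq_nonneg (((starRingEnd ℂ) z1 * z2 * (starRingEnd ℂ) (x 0) * x 1).im)]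
      calc R^2 ≤ _ := h1
        _ = t1 * t2 * n0 * n1 := by
          simp [Complex.normSq_mul, Complex.normSq_conj]; rfl
    have hS : 0 ≤ A * n0 + D * n1 := by positivity
    have h2 : (2*c*R)^2 ≤ (A * n0 + D * n1)^2 := by
      have e1 : (2*c*R)^2 = 4 * c^2 * R^2 := by ring
      nlinarith [sq_nonneg (A*n0 - D*n1), mul_nonneg (mul_nonneg hn0 hn1) (sq_nonneg c),
        mul_le_mul_of_nonneg_left hRsq (sq_nonneg c),
        mul_le_mul_of_nonneg_right hAD (mul_nonneg hn0 hn1)]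
    nlinarith [h2, hS]

lemma core_ineq (a b P Q t ε : ℝ) (ha : 0 ≤ a) (hb : 0 ≤ b) (hab : a + b = 1)
    (hP : 0 < P) (hQ : 0 < Q) (ht : 0 ≤ t) (hε : 0 < ε) :
    (a*P+b*Q)^2 * t ≤ (P+Q) * (a*P*(a*t+ε) + b*Q*(b*t+ε)) := by
  nlinarith [mul_pos hP hQ, sq_nonneg (a-b),
    mul_nonneg (mul_nonneg (mul_pos hP hQ).le ht) (sq_nonneg (a-b)),
    mul_nonneg (mul_pos hP hQ).le hε.le,
    mul_nonneg (mul_nonneg ha hε.le) (sq_nonneg P),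
    mul_nonneg (mul_nonneg hb hε.le) (sq_nonneg Q)]


set_option maxHeartbeats 1000000

/-- For `β ∈ [0,1)` and `ε > 0`, the complex Hessian of `v^ε` is positive semidefinite
everywhere on `ℂ²`; in particular `v^ε` is plurisubharmonic. -/
theorem cHess_vE_posSemidef (β : ℝ) (hβ : β ∈ Set.Ico (0 : ℝ) 1) (ε : ℝ) (hε : 0 < ε)
    (z : ℂ × ℂ) :
    (cHess (fun w => ((vE β ε w : ℝ) : ℂ)) z).PosSemidef := by
  obtain ⟨hb0, hb1⟩ := hβ
  have hC : (0:ℝ) < 2 / (1 - β) := by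
    apply div_pos; norm_num; linarith
  have ha0 : (0:ℝ) ≤ β / 2 := by linarith
  have hbb : (0:ℝ) ≤ 1 - β / 2 := by linarith
  set C : ℝ := 2 / (1 - β) with hCdef
  set a : ℝ := β / 2 with hadef
  set b : ℝ := 1 - β / 2 with hbdef
  have hab : a + b = 1 := by rw [hadef, hbdef]; ring
  have hFeq : (fun w : ℂ × ℂ => ((vE β ε w : ℝ) : ℂ)) =
      (fun p : ℂ × ℂ =>
        (((fun x => C * Real.sqrt x) (Complex.normSq p.2 + ε) *
          (fun x : ℝ => x ^ a + x ^ b) (Complex.normSq p.1 + ε) : ℝ) : ℂ)) := by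
    funext w
    simp only [vE, Complex.sq_norm]; rfl
  rw [hFeq]
  -- derivative packs
  have hgD : ∀ x, 0 < x → HasDerivAt (fun x => C * Real.sqrt x)
      ((fun x => C / (2 * Real.sqrt x)) x) x := fun x hx => hasDerivAt_g C hx
  have hgdD : ∀ x, 0 < x → HasDerivAt (fun x => C / (2 * Real.sqrt x))
      ((fun x => -(C / (4 * (x * Real.sqrt x)))) x) x := fun x hx => hasDerivAt_gd C hx
  have hhD : ∀ x, 0 < x → HasDerivAt (fun x : ℝ => x ^ a + x ^ b)
      ((fun x => a * x ^ (a-1) + b * x ^ (b-1)) x) x := fun x hx => hasDerivAt_h a b hx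
  have hhdD : ∀ x, 0 < x → HasDerivAt (fun x : ℝ => a * x ^ (a-1) + b * x ^ (b-1))
      ((fun x => a * (a-1) * x ^ (a-2) + b * (b-1) * x ^ (b-2)) x) x :=
    fun x hx => hasDerivAt_hd a b hx
  set t1 : ℝ := Complex.normSq z.1 with ht1def
  set t2 : ℝ := Complex.normSq z.2 with ht2def
  set s1 : ℝ := t1 + ε with hs1def
  set s2 : ℝ := t2 + ε with hs2def
  have ht1 : 0 ≤ t1 := Complex.normSq_nonneg _
  have ht2 : 0 ≤ t2 := Complex.normSq_nonneg _
  have hs1 : 0 < s1 := by rw [hs1def]; linarith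
  have hs2 : 0 < s2 := by rw [hs2def]; linarith
  have hM : cHess (fun p : ℂ × ℂ =>
        (((fun x => C * Real.sqrt x) (Complex.normSq p.2 + ε) *
          (fun x : ℝ => x ^ a + x ^ b) (Complex.normSq p.1 + ε) : ℝ) : ℂ)) z =
      !![((C * Real.sqrt s2 * (a * s1^(a-1) + b * s1^(b-1)) +
            C * Real.sqrt s2 * (a*(a-1)*s1^(a-2) + b*(b-1)*s1^(b-2)) * t1 : ℝ) : ℂ),
          ((C / (2*Real.sqrt s2) * (a * s1^(a-1) + b * s1^(b-1)) : ℝ) : ℂ) *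
            (starRingEnd ℂ) z.1 * z.2;
          ((C / (2*Real.sqrt s2) * (a * s1^(a-1) + b * s1^(b-1)) : ℝ) : ℂ) *
            z.1 * (starRingEnd ℂ) z.2,
          ((C / (2*Real.sqrt s2) * (s1^a + s1^b) +
            (-(C / (4*(s2*Real.sqrt s2)))) * (s1^a + s1^b) * t2 : ℝ) : ℂ)] := by
    rw [cHess]
    rw [funext (wd1b_F (fun x => C * Real.sqrt x) (fun x : ℝ => x ^ a + x ^ b)
      (fun x => C / (2 * Real.sqrt x)) (fun x => a * x ^ (a-1) + b * x ^ (b-1)) ε hgD hhD hε)]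
    rw [funext (wd2b_F (fun x => C * Real.sqrt x) (fun x : ℝ => x ^ a + x ^ b)
      (fun x => C / (2 * Real.sqrt x)) (fun x => a * x ^ (a-1) + b * x ^ (b-1)) ε hgD hhD hε)]
    rw [(wd_mulFst (fun x => C * Real.sqrt x) (fun x => a * x ^ (a-1) + b * x ^ (b-1))
      (fun x => C / (2 * Real.sqrt x))
      (fun x => a * (a-1) * x ^ (a-2) + b * (b-1) * x ^ (b-2)) ε hgD hhdD hε z).1]
    rw [(wd_mulFst (fun x => C * Real.sqrt x) (fun x => a * x ^ (a-1) + b * x ^ (b-1))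
      (fun x => C / (2 * Real.sqrt x))
      (fun x => a * (a-1) * x ^ (a-2) + b * (b-1) * x ^ (b-2)) ε hgD hhdD hε z).2]
    rw [(wd_mulSnd (fun x => C / (2 * Real.sqrt x)) (fun x : ℝ => x ^ a + x ^ b)
      (fun x => -(C / (4 * (x * Real.sqrt x)))) (fun x => a * x ^ (a-1) + b * x ^ (b-1))
      ε hgdD hhD hε z).1]
    rw [(wd_mulSnd (fun x => C / (2 * Real.sqrt x)) (fun x : ℝ => x ^ a + x ^ b)
      (fun x => -(C / (4 * (x * Real.sqrt x)))) (fun x => a * x ^ (a-1) + b * x ^ (b-1))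
      ε hgdD hhD hε z).2]
  rw [hM]
  set r2 : ℝ := Real.sqrt s2 with hr2def
  have hr2 : 0 < r2 := Real.sqrt_pos.2 hs2
  have hr2sq : r2 ^ 2 = s2 := Real.sq_sqrt hs2.le
  set P : ℝ := s1 ^ (a - 1) with hPdef
  set Q : ℝ := s1 ^ (b - 1) with hQdef
  have hP : 0 < P := Real.rpow_pos_of_pos hs1 _
  have hQ : 0 < Q := Real.rpow_pos_of_pos hs1 _
  have idP : s1 ^ (a - 2) * s1 = P := by
    rw [hPdef, ← Real.rpow_add_one hs1.ne']; congr 1; ring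
  have idQ : s1 ^ (b - 2) * s1 = Q := by
    rw [hQdef, ← Real.rpow_add_one hs1.ne']; congr 1; ring
  have idA : s1 ^ a = P * s1 := by
    rw [hPdef, ← Real.rpow_add_one hs1.ne']; congr 1; ring
  have idB : s1 ^ b = Q * s1 := by
    rw [hQdef, ← Real.rpow_add_one hs1.ne']; congr 1; ring
  have hE1s : (a*P + b*Q + (a*(a-1)*s1^(a-2) + b*(b-1)*s1^(b-2))*t1) * s1
      = a*P*(a*t1+ε) + b*Q*(b*t1+ε) := by
    linear_combination (a*(a-1)*t1)*idP + (b*(b-1)*t1)*idQ + (a*P+b*Q)*hs1def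
  have hRHS1 : 0 ≤ a*P*(a*t1+ε) + b*Q*(b*t1+ε) := by
    have h1 : 0 ≤ a*t1+ε := add_nonneg (mul_nonneg ha0 ht1) hε.le
    have h2 : 0 ≤ b*t1+ε := add_nonneg (mul_nonneg hbb ht1) hε.le
    have := mul_nonneg (mul_nonneg ha0 hP.le) h1
    have := mul_nonneg (mul_nonneg hbb hQ.le) h2
    linarith
  have hE1 : 0 ≤ a*P + b*Q + (a*(a-1)*s1^(a-2) + b*(b-1)*s1^(b-2))*t1 := by
    have h0 : 0 ≤ (a*P + b*Q + (a*(a-1)*s1^(a-2) + b*(b-1)*s1^(b-2))*t1) * s1 := by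
      rw [hE1s]; exact hRHS1
    exact (mul_nonneg_iff_of_pos_right hs1).mp h0
  have hE2 : C/(2*r2) + -(C/(4*(s2*r2)))*t2 = C*(t2+2*ε)/(4*(s2*r2)) := by
    rw [hs2def]
    field_simp
    ring
  have hE2pos : 0 ≤ C*(t2+2*ε)/(4*(s2*r2)) := by positivity
  have hE2pos' : 0 ≤ C/(2*r2) + -(C/(4*(s2*r2)))*t2 := by rw [hE2]; exact hE2pos
  have hhd0 : 0 ≤ a*P + b*Q :=
    add_nonneg (mul_nonneg ha0 hP.le) (mul_nonneg hbb hQ.le)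
  clear hFeq hgD hgdD hhD hhdD hM
  clear_value C a b t1 t2 s1 s2 r2 P Q
  apply posSemidef_aux
  · -- 0 ≤ A
    exact (mul_nonneg (mul_nonneg hC.le hr2.le) hE1).trans_eq (by ring)
  · -- 0 ≤ D
    have hh0 : (0:ℝ) ≤ s1^a + s1^b := by positivity
    exact (mul_nonneg hh0 hE2pos').trans_eq (by ring)
  · -- 0 ≤ c
    exact mul_nonneg (by positivity) hhd0
  · -- hAD
    rw [← ht1def, ← ht2def]
    have i1 : (C/(2*r2))^2 * t2 ≤ (C*r2) * (C/(2*r2) + -(C/(4*(s2*r2)))*t2) := by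
      rw [hE2]
      have e1 : (C/(2*r2))^2 * t2 = C^2*t2/(4*s2) := by
        rw [← hr2sq]; ring
      have e2 : (C*r2) * (C*(t2+2*ε)/(4*(s2*r2))) = C^2*(t2+2*ε)/(4*s2) := by
        rw [← hr2sq]; field_simp
      rw [e1, e2, div_le_div_iff_of_pos_right (by positivity : (0:ℝ) < 4*s2)]
      nlinarith [mul_nonneg (sq_nonneg C) hε.le]
    have i2 : (a*P+b*Q)^2 * t1 ≤
        (s1^a+s1^b) * (a*P + b*Q + (a*(a-1)*s1^(a-2) + b*(b-1)*s1^(b-2))*t1) := by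
      have hhs : s1^a + s1^b = (P+Q)*s1 := by linear_combination idA + idB
      have hprod : (s1^a+s1^b) * (a*P + b*Q + (a*(a-1)*s1^(a-2) + b*(b-1)*s1^(b-2))*t1)
          = (P+Q) * (a*P*(a*t1+ε) + b*Q*(b*t1+ε)) := by
        calc (s1^a+s1^b) * (a*P + b*Q + (a*(a-1)*s1^(a-2) + b*(b-1)*s1^(b-2))*t1)
            = (P+Q) * ((a*P + b*Q + (a*(a-1)*s1^(a-2) + b*(b-1)*s1^(b-2))*t1) * s1) := by
              rw [hhs]; ring
          _ = (P+Q) * (a*P*(a*t1+ε) + b*Q*(b*t1+ε)) := by rw [hE1s]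
      rw [hprod]
      exact core_ineq a b P Q t1 ε ha0 hbb hab hP hQ ht1 hε
    have hnn1 : (0:ℝ) ≤ (a*P+b*Q)^2 * t1 := mul_nonneg (sq_nonneg _) ht1
    have hnn2 : (0:ℝ) ≤ (C*r2) * (C/(2*r2) + -(C/(4*(s2*r2)))*t2) :=
      mul_nonneg (mul_nonneg hC.le hr2.le) hE2pos'
    calc (C/(2*r2) * (a*P+b*Q))^2 * (t1*t2)
        = ((C/(2*r2))^2 * t2) * ((a*P+b*Q)^2 * t1) := by ring
      _ ≤ ((C*r2) * (C/(2*r2) + -(C/(4*(s2*r2)))*t2)) *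
          ((s1^a+s1^b) * (a*P + b*Q + (a*(a-1)*s1^(a-2) + b*(b-1)*s1^(b-2))*t1)) :=
          mul_le_mul i1 i2 hnn1 hnn2
      _ = (C*r2*(a*P+b*Q) + C*r2*(a*(a-1)*s1^(a-2) + b*(b-1)*s1^(b-2))*t1) *
          (C/(2*r2)*(s1^a+s1^b) + -(C/(4*(s2*r2)))*(s1^a+s1^b)*t2) := by ring
end

section
/- For γ ∈ [0,2), the function w(z₁,z₂) = |z₁|^γ|z₂|² + (4/(2-γ)²)|z₁|^{2-γ} satisfies det(∂∂̄ w) = 1 at every point of ℂ² with z₁ ≠ 0. -/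
section aux
open Complex

noncomputable def R1 : ℂ × ℂ →L[ℝ] ℝ := Complex.reCLM.comp (ContinuousLinearMap.fst ℝ ℂ ℂ)
noncomputable def I1 : ℂ × ℂ →L[ℝ] ℝ := Complex.imCLM.comp (ContinuousLinearMap.fst ℝ ℂ ℂ)
noncomputable def R2 : ℂ × ℂ →L[ℝ] ℝ := Complex.reCLM.comp (ContinuousLinearMap.snd ℝ ℂ ℂ)
noncomputable def I2 : ℂ × ℂ →L[ℝ] ℝ := Complex.imCLM.comp (ContinuousLinearMap.snd ℝ ℂ ℂ)

@[simp] lemma R1_apply (v : ℂ × ℂ) : R1 v = v.1.re := rfl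
@[simp] lemma I1_apply (v : ℂ × ℂ) : I1 v = v.1.im := rfl
@[simp] lemma R2_apply (v : ℂ × ℂ) : R2 v = v.2.re := rfl
@[simp] lemma I2_apply (v : ℂ × ℂ) : I2 v = v.2.im := rfl

lemma hn1 (p : ℂ × ℂ) : HasFDerivAt (fun q : ℂ × ℂ => Complex.normSq q.1)
    ((2 * p.1.re) • R1 + (2 * p.1.im) • I1) p := by
  have hre : HasFDerivAt (fun q : ℂ × ℂ => q.1.re) R1 p := R1.hasFDerivAt
  have him : HasFDerivAt (fun q : ℂ × ℂ => q.1.im) I1 p := I1.hasFDerivAt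
  have h := (hre.mul hre).add (him.mul him)
  simp only [Pi.mul_def, Pi.add_def, ← Complex.normSq_apply] at h
  have e : p.1.re • R1 + p.1.re • R1 + (p.1.im • I1 + p.1.im • I1)
      = (2 * p.1.re) • R1 + (2 * p.1.im) • I1 := by module
  rwa [e] at h

lemma hn2 (p : ℂ × ℂ) : HasFDerivAt (fun q : ℂ × ℂ => Complex.normSq q.2)
    ((2 * p.2.re) • R2 + (2 * p.2.im) • I2) p := by
  have hre : HasFDerivAt (fun q : ℂ × ℂ => q.2.re) R2 p := R2.hasFDerivAt
  have him : HasFDerivAt (fun q : ℂ × ℂ => q.2.im) I2 p := I2.hasFDerivAt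
  have h := (hre.mul hre).add (him.mul him)
  simp only [Pi.mul_def, Pi.add_def, ← Complex.normSq_apply] at h
  have e : p.2.re • R2 + p.2.re • R2 + (p.2.im • I2 + p.2.im • I2)
      = (2 * p.2.re) • R2 + (2 * p.2.im) • I2 := by module
  rwa [e] at h

lemma hq (c : ℝ) (p : ℂ × ℂ) (hp : p.1 ≠ 0) :
    HasFDerivAt (fun q : ℂ × ℂ => Complex.normSq q.1 ^ c)
      ((c * Complex.normSq p.1 ^ (c - 1)) • ((2 * p.1.re) • R1 + (2 * p.1.im) • I1)) p := by
  have h0 : Complex.normSq p.1 ≠ 0 := by simpa [Complex.normSq_eq_zero] using hp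
  exact (Real.hasDerivAt_rpow_const (Or.inl h0)).comp_hasFDerivAt p (hn1 p)

end aux

/-- `w(z₁,z₂) = |z₁|^γ |z₂|² + (4/(2-γ)²)|z₁|^{2-γ}`. -/
noncomputable def w (γ : ℝ) (z : ℂ × ℂ) : ℝ :=
  (‖z.1‖) ^ γ * (‖z.2‖) ^ 2
    + (4 / (2 - γ) ^ 2) * (‖z.1‖) ^ (2 - γ)

section layer1
open Complex

lemma abs_rpow_eq (a : ℝ) (z : ℂ) : (‖z‖) ^ a = Complex.normSq z ^ (a / 2) := by
  rw [Complex.norm_def, Real.sqrt_eq_rpow, ← Real.rpow_mul (Complex.normSq_nonneg z)]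
  ring_nf

noncomputable def uu (γ : ℝ) (q : ℂ × ℂ) : ℝ :=
  Complex.normSq q.1 ^ (γ / 2) * Complex.normSq q.2
    + (4 / (2 - γ) ^ 2) * Complex.normSq q.1 ^ ((2 - γ) / 2)

lemma w_eq_u (γ : ℝ) : (fun q : ℂ × ℂ => ((w γ q : ℝ) : ℂ)) = fun q => ((uu γ q : ℝ) : ℂ) := by
  funext q
  simp only [w, uu, abs_rpow_eq, Complex.sq_norm]

lemma hu (γ : ℝ) (p : ℂ × ℂ) (hp : p.1 ≠ 0) :
    HasFDerivAt (fun q => ((uu γ q : ℝ) : ℂ))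
      (Complex.ofRealCLM.comp
        ((Complex.normSq p.1 ^ (γ / 2)) • ((2 * p.2.re) • R2 + (2 * p.2.im) • I2)
          + (Complex.normSq p.2) • ((γ / 2 * Complex.normSq p.1 ^ (γ / 2 - 1)) •
              ((2 * p.1.re) • R1 + (2 * p.1.im) • I1))
          + (4 / (2 - γ) ^ 2) • (((2 - γ) / 2 * Complex.normSq p.1 ^ ((2 - γ) / 2 - 1)) •
              ((2 * p.1.re) • R1 + (2 * p.1.im) • I1)))) p := by
  have h := ((hq (γ / 2) p hp).mul (hn2 p)).add ((hq ((2 - γ) / 2) p hp).const_mul (4 / (2 - γ) ^ 2))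
  exact Complex.ofRealCLM.hasFDerivAt.comp p h

/-- the function equal to `wd1b (w γ)` away from `z₁ = 0`. -/
noncomputable def g1b (γ : ℝ) (p : ℂ × ℂ) : ℂ :=
  (((γ / 2 * Complex.normSq p.1 ^ (γ / 2 - 1) * Complex.normSq p.2
      + (4 / (2 - γ) ^ 2) * ((2 - γ) / 2) * Complex.normSq p.1 ^ ((2 - γ) / 2 - 1) : ℝ)) : ℂ) * p.1

/-- the function equal to `wd2b (w γ)` away from `z₁ = 0`. -/
noncomputable def g2b (γ : ℝ) (p : ℂ × ℂ) : ℂ :=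
  ((Complex.normSq p.1 ^ (γ / 2) : ℝ) : ℂ) * p.2

lemma wd1b_w (γ : ℝ) (p : ℂ × ℂ) (hp : p.1 ≠ 0) :
    wd1b (fun q => ((w γ q : ℝ) : ℂ)) p = g1b γ p := by
  rw [wd1b, w_eq_u, (hu γ p hp).fderiv, g1b]
  simp only [ContinuousLinearMap.add_apply, ContinuousLinearMap.smul_apply,
    ContinuousLinearMap.coe_comp', Function.comp_apply, Complex.ofRealCLM_apply,
    R1_apply, I1_apply, R2_apply, I2_apply, smul_eq_mul, Complex.I_re, Complex.I_im,
    Complex.one_re, Complex.one_im]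
  apply Complex.ext <;> simp <;> ring

lemma wd2b_w (γ : ℝ) (p : ℂ × ℂ) (hp : p.1 ≠ 0) :
    wd2b (fun q => ((w γ q : ℝ) : ℂ)) p = g2b γ p := by
  rw [wd2b, w_eq_u, (hu γ p hp).fderiv, g2b]
  simp only [ContinuousLinearMap.add_apply, ContinuousLinearMap.smul_apply,
    ContinuousLinearMap.coe_comp', Function.comp_apply, Complex.ofRealCLM_apply,
    R1_apply, I1_apply, R2_apply, I2_apply, smul_eq_mul, Complex.I_re, Complex.I_im,
    Complex.one_re, Complex.one_im]
  apply Complex.ext <;> simp <;> ring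

end layer1

section layer2
open Complex

lemma hg1b (γ : ℝ) (p : ℂ × ℂ) (hp : p.1 ≠ 0) :
    HasFDerivAt (g1b γ)
      ((((γ / 2 * Complex.normSq p.1 ^ (γ / 2 - 1) * Complex.normSq p.2
          + (4 / (2 - γ) ^ 2) * ((2 - γ) / 2) * Complex.normSq p.1 ^ ((2 - γ) / 2 - 1) : ℝ)) : ℂ)
         • (ContinuousLinearMap.fst ℝ ℂ ℂ)
        + p.1 • (Complex.ofRealCLM.comp
          (((γ / 2 * Complex.normSq p.1 ^ (γ / 2 - 1)) • ((2 * p.2.re) • R2 + (2 * p.2.im) • I2)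
            + (Complex.normSq p.2) • ((γ / 2) • (((γ / 2 - 1) * Complex.normSq p.1 ^ (γ / 2 - 1 - 1)) •
                ((2 * p.1.re) • R1 + (2 * p.1.im) • I1)))
            + (4 / (2 - γ) ^ 2 * ((2 - γ) / 2)) • ((((2 - γ) / 2 - 1) * Complex.normSq p.1 ^ ((2 - γ) / 2 - 1 - 1)) •
                ((2 * p.1.re) • R1 + (2 * p.1.im) • I1)))))) p := by
  have hρ : HasFDerivAt (fun q : ℂ × ℂ =>
      γ / 2 * Complex.normSq q.1 ^ (γ / 2 - 1) * Complex.normSq q.2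
        + (4 / (2 - γ) ^ 2) * ((2 - γ) / 2) * Complex.normSq q.1 ^ ((2 - γ) / 2 - 1))
      (((γ / 2 * Complex.normSq p.1 ^ (γ / 2 - 1)) • ((2 * p.2.re) • R2 + (2 * p.2.im) • I2)
        + (Complex.normSq p.2) • ((γ / 2) • (((γ / 2 - 1) * Complex.normSq p.1 ^ (γ / 2 - 1 - 1)) •
            ((2 * p.1.re) • R1 + (2 * p.1.im) • I1)))
        + (4 / (2 - γ) ^ 2 * ((2 - γ) / 2)) • ((((2 - γ) / 2 - 1) * Complex.normSq p.1 ^ ((2 - γ) / 2 - 1 - 1)) •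
            ((2 * p.1.re) • R1 + (2 * p.1.im) • I1)))) p := by
    have h1 := ((hq (γ / 2 - 1) p hp).const_mul (γ / 2)).mul (hn2 p)
    have h2 := (hq ((2 - γ) / 2 - 1) p hp).const_mul (4 / (2 - γ) ^ 2 * ((2 - γ) / 2))
    have h := h1.add h2
    exact h
  have hF : HasFDerivAt (fun q : ℂ × ℂ =>
      ((γ / 2 * Complex.normSq q.1 ^ (γ / 2 - 1) * Complex.normSq q.2
        + (4 / (2 - γ) ^ 2) * ((2 - γ) / 2) * Complex.normSq q.1 ^ ((2 - γ) / 2 - 1) : ℝ) : ℂ))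
      (Complex.ofRealCLM.comp _) p := Complex.ofRealCLM.hasFDerivAt.comp p hρ
  have hG : HasFDerivAt (fun q : ℂ × ℂ => q.1) (ContinuousLinearMap.fst ℝ ℂ ℂ) p :=
    hasFDerivAt_fst
  exact hF.mul hG

lemma hg2b (γ : ℝ) (p : ℂ × ℂ) (hp : p.1 ≠ 0) :
    HasFDerivAt (g2b γ)
      (((Complex.normSq p.1 ^ (γ / 2) : ℝ) : ℂ) • (ContinuousLinearMap.snd ℝ ℂ ℂ)
        + p.2 • (Complex.ofRealCLM.comp
          ((γ / 2 * Complex.normSq p.1 ^ (γ / 2 - 1)) • ((2 * p.1.re) • R1 + (2 * p.1.im) • I1)))) p := by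
  have hF : HasFDerivAt (fun q : ℂ × ℂ => ((Complex.normSq q.1 ^ (γ / 2) : ℝ) : ℂ))
      (Complex.ofRealCLM.comp _) p := Complex.ofRealCLM.hasFDerivAt.comp p (hq (γ / 2) p hp)
  have hG : HasFDerivAt (fun q : ℂ × ℂ => q.2) (ContinuousLinearMap.snd ℝ ℂ ℂ) p :=
    hasFDerivAt_snd
  exact hF.mul hG

lemma wd1_g1b (γ : ℝ) (p : ℂ × ℂ) (hp : p.1 ≠ 0) :
    wd1 (g1b γ) p
      = (((γ / 2 * ((γ / 2 - 1) * Complex.normSq p.1 ^ (γ / 2 - 1 - 1)) * Complex.normSq p.2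
          + (4 / (2 - γ) ^ 2 * ((2 - γ) / 2)) * (((2 - γ) / 2 - 1) * Complex.normSq p.1 ^ ((2 - γ) / 2 - 1 - 1)) : ℝ)) : ℂ)
          * (starRingEnd ℂ) p.1 * p.1
        + (((γ / 2 * Complex.normSq p.1 ^ (γ / 2 - 1) * Complex.normSq p.2
          + (4 / (2 - γ) ^ 2) * ((2 - γ) / 2) * Complex.normSq p.1 ^ ((2 - γ) / 2 - 1) : ℝ)) : ℂ) := by
  rw [wd1, (hg1b γ p hp).fderiv]
  simp only [ContinuousLinearMap.add_apply, ContinuousLinearMap.smul_apply,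
    ContinuousLinearMap.coe_comp', Function.comp_apply, Complex.ofRealCLM_apply,
    ContinuousLinearMap.coe_fst', ContinuousLinearMap.coe_snd',
    R1_apply, I1_apply, R2_apply, I2_apply, Complex.I_re, Complex.I_im,
    Complex.one_re, Complex.one_im]
  apply Complex.ext <;> simp <;> ring

lemma wd2_g1b (γ : ℝ) (p : ℂ × ℂ) (hp : p.1 ≠ 0) :
    wd2 (g1b γ) p
      = ((γ / 2 * Complex.normSq p.1 ^ (γ / 2 - 1) : ℝ) : ℂ) * (starRingEnd ℂ) p.2 * p.1 := by
  rw [wd2, (hg1b γ p hp).fderiv]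
  simp only [ContinuousLinearMap.add_apply, ContinuousLinearMap.smul_apply,
    ContinuousLinearMap.coe_comp', Function.comp_apply, Complex.ofRealCLM_apply,
    ContinuousLinearMap.coe_fst', ContinuousLinearMap.coe_snd',
    R1_apply, I1_apply, R2_apply, I2_apply, Complex.I_re, Complex.I_im,
    Complex.one_re, Complex.one_im]
  apply Complex.ext <;> simp <;> ring

lemma wd1_g2b (γ : ℝ) (p : ℂ × ℂ) (hp : p.1 ≠ 0) :
    wd1 (g2b γ) p
      = ((γ / 2 * Complex.normSq p.1 ^ (γ / 2 - 1) : ℝ) : ℂ) * (starRingEnd ℂ) p.1 * p.2 := by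
  rw [wd1, (hg2b γ p hp).fderiv]
  simp only [ContinuousLinearMap.add_apply, ContinuousLinearMap.smul_apply,
    ContinuousLinearMap.coe_comp', Function.comp_apply, Complex.ofRealCLM_apply,
    ContinuousLinearMap.coe_fst', ContinuousLinearMap.coe_snd',
    R1_apply, I1_apply, R2_apply, I2_apply, Complex.I_re, Complex.I_im,
    Complex.one_re, Complex.one_im]
  apply Complex.ext <;> simp <;> ring

lemma wd2_g2b (γ : ℝ) (p : ℂ × ℂ) (hp : p.1 ≠ 0) :
    wd2 (g2b γ) p = ((Complex.normSq p.1 ^ (γ / 2) : ℝ) : ℂ) := by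
  rw [wd2, (hg2b γ p hp).fderiv]
  simp only [ContinuousLinearMap.add_apply, ContinuousLinearMap.smul_apply,
    ContinuousLinearMap.coe_comp', Function.comp_apply, Complex.ofRealCLM_apply,
    ContinuousLinearMap.coe_fst', ContinuousLinearMap.coe_snd',
    R1_apply, I1_apply, R2_apply, I2_apply, Complex.I_re, Complex.I_im,
    Complex.one_re, Complex.one_im]
  apply Complex.ext <;> simp <;> ring

end layer2

/-- For `γ ∈ [0,2)`, `det(∂∂̄ w) = 1` at every point with `z₁ ≠ 0`. -/
theorem det_cHess_w (γ : ℝ) (hγ : γ ∈ Set.Ico (0 : ℝ) 2) (z : ℂ × ℂ) (h1 : z.1 ≠ 0) :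
    (cHess (fun p => ((w γ p : ℝ) : ℂ)) z).det = 1 := by
  have hU : IsOpen {p : ℂ × ℂ | p.1 ≠ 0} := isOpen_ne_fun continuous_fst continuous_const
  have hmem : {p : ℂ × ℂ | p.1 ≠ 0} ∈ nhds z := hU.mem_nhds h1
  have hev1 : wd1b (fun p => ((w γ p : ℝ) : ℂ)) =ᶠ[nhds z] g1b γ :=
    Filter.eventuallyEq_of_mem hmem (fun p hp => wd1b_w γ p hp)
  have hev2 : wd2b (fun p => ((w γ p : ℝ) : ℂ)) =ᶠ[nhds z] g2b γ :=
    Filter.eventuallyEq_of_mem hmem (fun p hp => wd2b_w γ p hp)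
  have e11 : wd1 (wd1b fun p => ((w γ p : ℝ) : ℂ)) z = wd1 (g1b γ) z := by
    simp only [wd1, hev1.fderiv_eq]
  have e21 : wd2 (wd1b fun p => ((w γ p : ℝ) : ℂ)) z = wd2 (g1b γ) z := by
    simp only [wd2, hev1.fderiv_eq]
  have e12 : wd1 (wd2b fun p => ((w γ p : ℝ) : ℂ)) z = wd1 (g2b γ) z := by
    simp only [wd1, hev2.fderiv_eq]
  have e22 : wd2 (wd2b fun p => ((w γ p : ℝ) : ℂ)) z = wd2 (g2b γ) z := by
    simp only [wd2, hev2.fderiv_eq]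
  rw [cHess, Matrix.det_fin_two_of, e11, e12, e21, e22,
    wd1_g1b γ z h1, wd2_g1b γ z h1, wd1_g2b γ z h1, wd2_g2b γ z h1]
  set t := Complex.normSq z.1 with htdef
  set s := Complex.normSq z.2 with hsdef
  have ht : 0 < t := Complex.normSq_pos.2 h1
  have h2γ : (2 : ℝ) - γ ≠ 0 := sub_ne_zero_of_ne (ne_of_gt hγ.2)
  have hz1 : (starRingEnd ℂ) z.1 * z.1 = (t : ℂ) := by
    rw [mul_comm, Complex.mul_conj]
  have hz2 : (starRingEnd ℂ) z.2 * z.2 = (s : ℂ) := by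
    rw [mul_comm, Complex.mul_conj]
  have key : ((γ / 2 * Complex.normSq z.1 ^ (γ / 2 - 1) : ℝ) : ℂ) * (starRingEnd ℂ) z.1 * z.2
        * (((γ / 2 * Complex.normSq z.1 ^ (γ / 2 - 1) : ℝ) : ℂ) * (starRingEnd ℂ) z.2 * z.1)
      = ((γ / 2 * t ^ (γ / 2 - 1) : ℝ) : ℂ) * ((γ / 2 * t ^ (γ / 2 - 1) : ℝ) : ℂ)
        * ((t : ℝ) : ℂ) * ((s : ℝ) : ℂ) := by
    rw [show ((γ / 2 * Complex.normSq z.1 ^ (γ / 2 - 1) : ℝ) : ℂ) * (starRingEnd ℂ) z.1 * z.2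
        * (((γ / 2 * Complex.normSq z.1 ^ (γ / 2 - 1) : ℝ) : ℂ) * (starRingEnd ℂ) z.2 * z.1)
      = ((γ / 2 * Complex.normSq z.1 ^ (γ / 2 - 1) : ℝ) : ℂ)
        * ((γ / 2 * Complex.normSq z.1 ^ (γ / 2 - 1) : ℝ) : ℂ)
        * ((starRingEnd ℂ) z.1 * z.1) * ((starRingEnd ℂ) z.2 * z.2) from by ring,
      hz1, hz2]
  rw [key, mul_assoc _ ((starRingEnd ℂ) z.1) z.1, hz1]
  norm_cast
  have hX : (0:ℝ) < t ^ (γ / 2) := Real.rpow_pos_of_pos ht _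
  have hb : t ^ ((2 - γ) / 2) = t / t ^ (γ / 2) := by
    rw [eq_div_iff hX.ne', ← Real.rpow_add ht, show (2 - γ) / 2 + γ / 2 = 1 by ring,
      Real.rpow_one]
  have e2 : t ^ (γ / 2 - 1 - 1) = t ^ (γ / 2) / t / t := by
    rw [Real.rpow_sub ht, Real.rpow_sub ht, Real.rpow_one]
  have e1 : t ^ (γ / 2 - 1) = t ^ (γ / 2) / t := by
    rw [Real.rpow_sub ht, Real.rpow_one]
  have e4 : t ^ ((2 - γ) / 2 - 1 - 1) = (t / t ^ (γ / 2)) / t / t := by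
    rw [Real.rpow_sub ht, Real.rpow_sub ht, Real.rpow_one, hb]
  have e3 : t ^ ((2 - γ) / 2 - 1) = (t / t ^ (γ / 2)) / t := by
    rw [Real.rpow_sub ht, Real.rpow_one, hb]
  rw [e2, e4, e1, e3]
  field_simp
  ring
end
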